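/- arXiv:2011.05589 — 8 statements merged into one kernel-verified Lean document; each statement's English description precedes it below -/
import Mathlib

section
/- Let T > 0, n ∈ ℕ, and ρ̂ > 0. Let A : [0,T] → Mₙ(ℝ) and f : [0,T] → ℝⁿ be continuous, and suppose ⟨y, A(t) y⟩ ≥ ρ̂ ‖y‖² for all t ∈ [0,T] and all y ∈ ℝⁿ. If S : [0,T] → ℝⁿ is differentiable with S(0) = 0 and S′(t) = −A(t) S(t) + f(t) for all t ∈ [0,T], then ∫₀ᵀ ‖S(t)‖² dt ≤ ρ̂⁻² ∫₀ᵀ ‖f(t)‖² dt. -/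
open Matrix Set intervalIntegral

private lemma dot_self_nonneg_aux {n : ℕ} (v : Fin n → ℝ) : 0 ≤ v ⬝ᵥ v :=
  Finset.sum_nonneg fun i _ => mul_self_nonneg (v i)

private lemma contOn_dot_aux {n : ℕ} {s : Set ℝ} {u v : ℝ → Fin n → ℝ}
    (hu : ContinuousOn u s) (hv : ContinuousOn v s) :
    ContinuousOn (fun t => u t ⬝ᵥ v t) s := by
  simp only [dotProduct]
  exact continuousOn_finset_sum _ fun i _ =>
    ((continuous_apply i).comp_continuousOn hu).mul
      ((continuous_apply i).comp_continuousOn hv)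

/-- Coercivity estimate for the forward impact-state equation: if
`⟨y, A(t) y⟩ ≥ ρ̂ ‖y‖²` and `S' = −A S + f` with `S 0 = 0`, then
`∫₀ᵀ ‖S‖² ≤ ρ̂⁻² ∫₀ᵀ ‖f‖²` (squared Euclidean norms written as dot products). -/
theorem forward_state_coercivity_estimate
    (T : ℝ) (hT : 0 < T) (n : ℕ) (ρhat : ℝ) (hρ : 0 < ρhat)
    (A : ℝ → Matrix (Fin n) (Fin n) ℝ) (f : ℝ → (Fin n → ℝ))
    (hAc : ContinuousOn A (Set.Icc 0 T)) (hfc : ContinuousOn f (Set.Icc 0 T))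
    (hcoer : ∀ t ∈ Set.Icc (0 : ℝ) T, ∀ y : Fin n → ℝ,
      ρhat * (y ⬝ᵥ y) ≤ y ⬝ᵥ (A t *ᵥ y))
    (S : ℝ → (Fin n → ℝ)) (hS0 : S 0 = 0)
    (hS : ∀ t ∈ Set.Icc (0 : ℝ) T,
      HasDerivWithinAt S (-(A t *ᵥ S t) + f t) (Set.Icc (0 : ℝ) T) t) :
    (∫ t in (0:ℝ)..T, S t ⬝ᵥ S t) ≤ ρhat⁻¹ ^ 2 * ∫ t in (0:ℝ)..T, f t ⬝ᵥ f t := by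
  set g : ℝ → ℝ := fun t => S t ⬝ᵥ S t with hg
  set D : ℝ → ℝ := fun t => 2 * (S t ⬝ᵥ (-(A t *ᵥ S t) + f t)) with hD
  set φ : ℝ → ℝ := fun t => f t ⬝ᵥ f t with hφ
  -- continuity of S on Icc
  have hSc : ContinuousOn S (Set.Icc 0 T) := fun t ht =>
    (hS t ht).continuousWithinAt
  -- derivative of g
  have hgderiv : ∀ t ∈ Set.Icc (0 : ℝ) T, HasDerivWithinAt g (D t) (Set.Icc 0 T) t := by
    intro t ht
    have hSi : ∀ i, HasDerivWithinAt (fun τ => S τ i)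
        ((-(A t *ᵥ S t) + f t) i) (Set.Icc 0 T) t :=
      hasDerivWithinAt_pi.1 (hS t ht)
    have : HasDerivWithinAt (fun τ => ∑ i, S τ i * S τ i)
        (∑ i, ((-(A t *ᵥ S t) + f t) i * S t i + S t i * (-(A t *ᵥ S t) + f t) i))
        (Set.Icc 0 T) t :=
      HasDerivWithinAt.fun_sum fun i _ => (hSi i).mul (hSi i)
    convert this using 1
    · rfl
    simp [hD, dotProduct, Finset.mul_sum]
    congr 1
    ext i
    ring
  -- pointwise bound on D
  have hDle : ∀ t ∈ Set.Icc (0 : ℝ) T, D t ≤ -ρhat * g t + ρhat⁻¹ * φ t := by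
    intro t ht
    have h1 : ρhat * (S t ⬝ᵥ S t) ≤ S t ⬝ᵥ (A t *ᵥ S t) := hcoer t ht (S t)
    have h2 : (0:ℝ) ≤ (ρhat • S t - f t) ⬝ᵥ (ρhat • S t - f t) := dot_self_nonneg_aux _
    have hexp : (ρhat • S t - f t) ⬝ᵥ (ρhat • S t - f t)
        = ρhat * ρhat * (S t ⬝ᵥ S t) - 2 * ρhat * (S t ⬝ᵥ f t) + f t ⬝ᵥ f t := by
      simp [sub_dotProduct, dotProduct_sub, smul_dotProduct, dotProduct_smul,
        dotProduct_comm (f t) (S t), smul_eq_mul]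
      ring
    rw [hexp] at h2
    have hD' : D t = -2 * (S t ⬝ᵥ (A t *ᵥ S t)) + 2 * (S t ⬝ᵥ f t) := by
      simp [hD, dotProduct_add, dotProduct_neg]
      ring
    rw [hD']
    have hρinv : ρhat⁻¹ * ρhat = 1 := inv_mul_cancel₀ hρ.ne'
    simp only [hg, hφ]
    have e : ρhat⁻¹ * (ρhat * ρhat * (S t ⬝ᵥ S t) - 2 * ρhat * (S t ⬝ᵥ f t) + f t ⬝ᵥ f t)
        = ρhat * (S t ⬝ᵥ S t) - 2 * (S t ⬝ᵥ f t) + ρhat⁻¹ * (f t ⬝ᵥ f t) := by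
      field_simp
    have h2' := mul_nonneg (le_of_lt (inv_pos.2 hρ)) h2
    rw [e] at h2'
    linarith
  -- integrability
  have hgc : ContinuousOn g (Set.Icc 0 T) := contOn_dot_aux hSc hSc
  have hφc : ContinuousOn φ (Set.Icc 0 T) := contOn_dot_aux hfc hfc
  have hAS : ContinuousOn (fun t => A t *ᵥ S t) (Set.Icc 0 T) := by
    apply continuousOn_pi.2
    intro i
    simp only [Matrix.mulVec, dotProduct]
    exact continuousOn_finset_sum _ fun j _ =>
      ((continuous_apply_apply i j).comp_continuousOn hAc).mul
        ((continuous_apply j).comp_continuousOn hSc)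
  have hDc : ContinuousOn D (Set.Icc 0 T) := by
    apply ContinuousOn.mul continuousOn_const
    exact contOn_dot_aux hSc ((hAS.neg).add hfc)
  have hgint : IntervalIntegrable g MeasureTheory.volume 0 T := by
    apply ContinuousOn.intervalIntegrable; rwa [uIcc_of_le hT.le]
  have hφint : IntervalIntegrable φ MeasureTheory.volume 0 T := by
    apply ContinuousOn.intervalIntegrable; rwa [uIcc_of_le hT.le]
  have hDint : IntervalIntegrable D MeasureTheory.volume 0 T := by
    apply ContinuousOn.intervalIntegrable; rwa [uIcc_of_le hT.le]
  have hbint : IntervalIntegrable (fun t => -ρhat * g t + ρhat⁻¹ * φ t)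
      MeasureTheory.volume 0 T := (hgint.const_mul _).add (hφint.const_mul _)
  -- FTC
  have hftc : ∫ t in (0:ℝ)..T, D t = g T - g 0 := by
    apply integral_eq_sub_of_hasDeriv_right_of_le hT.le hgc _ hDint
    intro x hx
    have hx' : x ∈ Set.Icc (0:ℝ) T := Set.mem_Icc_of_Ioo hx
    exact ((hgderiv x hx').hasDerivAt (Icc_mem_nhds hx.1 hx.2)).hasDerivWithinAt
  have hg0 : g 0 = 0 := by simp [hg, hS0]
  have hgT : 0 ≤ g T := dot_self_nonneg_aux _
  -- integral comparison
  have hcomp : ∫ t in (0:ℝ)..T, D t ≤ ∫ t in (0:ℝ)..T, (-ρhat * g t + ρhat⁻¹ * φ t) := by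
    apply integral_mono_on hT.le hDint hbint
    exact hDle
  have hsplit : ∫ t in (0:ℝ)..T, (-ρhat * g t + ρhat⁻¹ * φ t)
      = -ρhat * (∫ t in (0:ℝ)..T, g t) + ρhat⁻¹ * ∫ t in (0:ℝ)..T, φ t := by
    rw [integral_add (hgint.const_mul _) (hφint.const_mul _),
      integral_const_mul, integral_const_mul]
  rw [hftc, hg0, sub_zero] at hcomp
  rw [hsplit] at hcomp
  have key : ρhat * (∫ t in (0:ℝ)..T, g t) ≤ ρhat⁻¹ * ∫ t in (0:ℝ)..T, φ t := by
    linarith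
  have hρinv : ρhat⁻¹ * ρhat = 1 := inv_mul_cancel₀ hρ.ne'
  have := mul_le_mul_of_nonneg_left key (le_of_lt (inv_pos.2 hρ))
  calc (∫ t in (0:ℝ)..T, S t ⬝ᵥ S t)
      = ρhat⁻¹ * (ρhat * ∫ t in (0:ℝ)..T, g t) := by
        rw [← mul_assoc, hρinv, one_mul]
    _ ≤ ρhat⁻¹ * (ρhat⁻¹ * ∫ t in (0:ℝ)..T, φ t) :=
        mul_le_mul_of_nonneg_left key (le_of_lt (inv_pos.2 hρ))
    _ = ρhat⁻¹ ^ 2 * ∫ t in (0:ℝ)..T, f t ⬝ᵥ f t := by ring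
end

section
/- Let T > 0, n ∈ ℕ, and φ₀₀, φ₀₁, φ₁₀, φ₁₁, D_T ∈ Mₙ(ℝ). Let 𝒫 ∈ M₂ₙ(ℝ) be the block matrix with blocks [[φ₀₀, φ₀₁], [φ₁₀, φ₁₁]], and for t ∈ [0,T] set Φ(t) := exp((T−t)𝒫) (matrix exponential). Let L := (D_T | −Iₙ) ∈ Mₙ,₂ₙ(ℝ), let E₁ := (Iₙ ; 0ₙ) and E₂ := (0ₙ ; Iₙ) ∈ M₂ₙ,ₙ(ℝ), and set M(t) := L Φ(t) E₂. Assume M(t) is invertible for every t ∈ [0,T], and define D(t) := −M(t)⁻¹ L Φ(t) E₁. Then D(T) = D_T, and D is differentiable on [0,T] with D′(t) = −D(t) φ₀₁ D(t) − D(t) φ₀₀ + φ₁₁ D(t) + φ₁₀ for every t ∈ [0,T]. -/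
open Matrix Set

section AuxLinfty

attribute [local instance] Matrix.linftyOpNormedAddCommGroup Matrix.linftyOpNormedRing
  Matrix.linftyOpNormedAlgebra

/-- Auxiliary version of the derivative statement, proved in the `L∞`-operator-norm
world (where `Matrix n n ℝ` is a normed ring), stated in the norm-free `slope` form. -/
theorem riccati_aux (T : ℝ) (n : ℕ)
    (φ00 φ01 φ10 φ11 : Matrix (Fin n) (Fin n) ℝ)
    (P : Matrix (Fin n ⊕ Fin n) (Fin n ⊕ Fin n) ℝ)
    (Φ : ℝ → Matrix (Fin n ⊕ Fin n) (Fin n ⊕ Fin n) ℝ)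
    (hΦ : ∀ t, Φ t = NormedSpace.exp ((T - t) • P))
    (L : Matrix (Fin n) (Fin n ⊕ Fin n) ℝ)
    (E₁ E₂ : Matrix (Fin n ⊕ Fin n) (Fin n) ℝ)
    (M : ℝ → Matrix (Fin n) (Fin n) ℝ)
    (hM : ∀ t, M t = L * Φ t * E₂)
    (D : ℝ → Matrix (Fin n) (Fin n) ℝ)
    (hD : ∀ t, D t = -((M t)⁻¹ * L * Φ t * E₁))
    (hPE₁ : P * E₁ = E₁ * φ00 + E₂ * φ10)
    (hPE₂ : P * E₂ = E₁ * φ01 + E₂ * φ11)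
    (t : ℝ) (ht : IsUnit (M t)) :
    Filter.Tendsto (slope D t) (nhdsWithin t {t}ᶜ)
      (nhds (-(D t * φ01 * D t) - D t * φ00 + φ11 * D t + φ10)) := by
  refine hasDerivAt_iff_tendsto_slope.mp ?_
  -- derivative of the fundamental solution
  have hΦd : HasDerivAt Φ (-(Φ t * P)) t := by
    have h1 := hasDerivAt_exp_smul_const (𝕂 := ℝ) P (T - t)
    have h2 : HasDerivAt (fun s : ℝ => T - s) (-1 : ℝ) t := by
      simpa using (hasDerivAt_id t).const_sub T
    have h3 := h1.scomp t h2
    have hfe : Φ = fun s => NormedSpace.exp ((T - s) • P) := funext hΦ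
    rw [hfe]
    simp only [Function.comp_def, neg_one_smul] at h3
    exact h3
  -- derivative of s ↦ L * Φ s * Eb
  have key : ∀ Eb : Matrix (Fin n ⊕ Fin n) (Fin n) ℝ,
      HasDerivAt (fun s => L * Φ s * Eb) (L * -(Φ t * P) * Eb) t := by
    intro Eb
    let lm : Matrix (Fin n ⊕ Fin n) (Fin n ⊕ Fin n) ℝ →ₗ[ℝ] Matrix (Fin n) (Fin n) ℝ :=
      { toFun := fun X => L * X * Eb
        map_add' := fun X Y => by
          rw [Matrix.mul_add, Matrix.add_mul]
        map_smul' := fun c X => by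
          simp [Matrix.mul_smul, Matrix.smul_mul] }
    exact lm.toContinuousLinearMap.hasFDerivAt.comp_hasDerivAt t hΦd
  have hMfun : M = fun s => L * Φ s * E₂ := funext hM
  have hMd : HasDerivAt M (-((L * Φ t * E₁) * φ01 + M t * φ11)) t := by
    rw [hM t, hMfun]
    convert key E₂ using 1
    simp only [Matrix.mul_neg, Matrix.neg_mul, neg_inj, Matrix.mul_assoc, hPE₂,
      Matrix.mul_add]
  have hNd : HasDerivAt (fun s => L * Φ s * E₁)
      (-((L * Φ t * E₁) * φ00 + M t * φ10)) t := by
    rw [hM t]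
    convert key E₁ using 1
    simp only [Matrix.mul_neg, Matrix.neg_mul, neg_inj, Matrix.mul_assoc, hPE₁,
      Matrix.mul_add]
  -- derivative of the inverse
  have hdet : IsUnit (M t).det := (Matrix.isUnit_iff_isUnit_det _).mp ht
  have hcoe : (↑ht.unit⁻¹ : Matrix (Fin n) (Fin n) ℝ) = (M t)⁻¹ := by
    rw [Matrix.nonsing_inv_eq_ringInverse, ← Ring.inverse_unit ht.unit, ht.unit_spec]
  have hinv : HasDerivAt (fun s => Ring.inverse (M s))
      (-((M t)⁻¹ * -((L * Φ t * E₁) * φ01 + M t * φ11) * (M t)⁻¹)) t := by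
    have h := (hasFDerivAt_ringInverse (𝕜 := ℝ) ht.unit).comp_hasDerivAt t hMd
    simp [hcoe] at h ⊢
    exact h
  -- product rule
  have hDfun : D = fun s => -(Ring.inverse (M s) * (L * Φ s * E₁)) := by
    funext s
    rw [hD s, Matrix.nonsing_inv_eq_ringInverse]
    simp only [Matrix.mul_assoc]
  have hDd := ((hinv.mul hNd).neg)
  refine HasDerivAt.congr_of_eventuallyEq ?_
    (Filter.Eventually.of_forall fun s => by rw [hDfun])
  convert hDd using 1
  case e'_8 => rfl
  -- algebraic identification of the derivative value
  have h1 : (M t)⁻¹ * M t = 1 := Matrix.nonsing_inv_mul _ hdet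
  have h1' : ∀ X : Matrix (Fin n) (Fin n) ℝ, (M t)⁻¹ * (M t * X) = X := fun X => by
    rw [← mul_assoc, h1, one_mul]
  have hDt : D t = -((M t)⁻¹ * (L * Φ t * E₁)) := by
    rw [hD t]; simp only [Matrix.mul_assoc]
  have hRi : Ring.inverse (M t) = (M t)⁻¹ := (Matrix.nonsing_inv_eq_ringInverse _).symm
  rw [hDt, hRi]
  simp only [mul_neg, neg_mul, neg_neg, mul_add, add_mul, mul_assoc, h1', neg_add_rev,
    sub_eq_add_neg]
  abel
end AuxLinfty

attribute [local instance] Matrix.normedAddCommGroup Matrix.normedSpace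

/-- Explicit solution of the matrix Riccati terminal value problem via the
fundamental solution `Φ(t) = exp((T−t)𝒫)` of the linear forward–backward ODE
system: `D(t) = −(LΦ(t)E₂)⁻¹ LΦ(t)E₁` satisfies `D(T) = D_T` and
`D' = −Dφ₀₁D − Dφ₀₀ + φ₁₁D + φ₁₀` on `[0,T]`. -/
theorem riccati_explicit_solution
    (T : ℝ) (hT : 0 < T) (n : ℕ)
    (φ00 φ01 φ10 φ11 DT : Matrix (Fin n) (Fin n) ℝ)
    (P : Matrix (Fin n ⊕ Fin n) (Fin n ⊕ Fin n) ℝ)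
    (hP : P = Matrix.fromBlocks φ00 φ01 φ10 φ11)
    (Φ : ℝ → Matrix (Fin n ⊕ Fin n) (Fin n ⊕ Fin n) ℝ)
    (hΦ : ∀ t, Φ t = NormedSpace.exp ((T - t) • P))
    (L : Matrix (Fin n) (Fin n ⊕ Fin n) ℝ)
    (hL : L = Matrix.fromCols DT (-(1 : Matrix (Fin n) (Fin n) ℝ)))
    (E₁ E₂ : Matrix (Fin n ⊕ Fin n) (Fin n) ℝ)
    (hE₁ : E₁ = Matrix.fromRows (1 : Matrix (Fin n) (Fin n) ℝ) 0)
    (hE₂ : E₂ = Matrix.fromRows 0 (1 : Matrix (Fin n) (Fin n) ℝ))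
    (M : ℝ → Matrix (Fin n) (Fin n) ℝ)
    (hM : ∀ t, M t = L * Φ t * E₂)
    (hMinv : ∀ t ∈ Set.Icc (0 : ℝ) T, IsUnit (M t))
    (D : ℝ → Matrix (Fin n) (Fin n) ℝ)
    (hD : ∀ t, D t = -((M t)⁻¹ * L * Φ t * E₁)) :
    D T = DT ∧
      ∀ t ∈ Set.Icc (0 : ℝ) T,
        HasDerivAt D (-(D t * φ01 * D t) - D t * φ00 + φ11 * D t + φ10) t := by
  have hΦT : Φ T = 1 := by
    rw [hΦ]; simp [NormedSpace.exp_zero]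
  have hMT : M T = -1 := by
    rw [hM, hΦT, Matrix.mul_one, hL, hE₂, Matrix.fromCols_mul_fromRows]
    simp
  have hMTinv : (M T)⁻¹ = -1 := by
    rw [hMT]
    exact Matrix.inv_eq_right_inv (by simp)
  have hDT : D T = DT := by
    rw [hD, hMTinv, hΦT, hL, hE₁]
    simp [Matrix.fromCols_mul_fromRows]
  refine ⟨hDT, fun t htt => ?_⟩
  have hPE₁ : P * E₁ = E₁ * φ00 + E₂ * φ10 := by
    rw [hP, hE₁, hE₂, Matrix.fromBlocks_mul_fromRows, Matrix.fromRows_mul, Matrix.fromRows_mul]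
    ext (i | i) j <;> simp
  have hPE₂ : P * E₂ = E₁ * φ01 + E₂ * φ11 := by
    rw [hP, hE₁, hE₂, Matrix.fromBlocks_mul_fromRows, Matrix.fromRows_mul, Matrix.fromRows_mul]
    ext (i | i) j <;> simp
  refine hasDerivAt_iff_tendsto_slope.mpr ?_
  exact riccati_aux T n φ00 φ01 φ10 φ11 P Φ hΦ L E₁ E₂ M hM D hD hPE₁ hPE₂ t (hMinv t htt)
end

section
/- Let T > 0, n ∈ ℕ, φ₀₀, φ₀₁, φ₁₀, φ₁₁, D_T ∈ Mₙ(ℝ), and F⁰ ∈ ℝⁿ. Let 𝒫 ∈ M₂ₙ(ℝ) be the block matrix with blocks [[φ₀₀, φ₀₁], [φ₁₀, φ₁₁]], Φ(t) := exp((T−t)𝒫), L := (D_T | −Iₙ), E₂ := (0ₙ ; Iₙ), and M(t) := L Φ(t) E₂; assume M(t) is invertible for every t ∈ [0,T] and let D(t) := −M(t)⁻¹ L Φ(t) E₁ with E₁ := (Iₙ ; 0ₙ). Define D⁰(t) := −M(t)⁻¹ L (∫ₜᵀ Φ(s) ds) v, where v := (F⁰ ; 0) ∈ ℝ²ⁿ.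 Then D⁰(T) = 0 and D⁰ is differentiable on [0,T] with (D⁰)′(t) = (φ₁₁ − D(t) φ₀₁) D⁰(t) − D(t) F⁰ for every t ∈ [0,T]. -/
open Matrix Set

section linftyAux
variable {q : Type*} [Fintype q] [DecidableEq q]
attribute [local instance] Matrix.linftyOpNormedRing Matrix.linftyOpNormedAlgebra

private def entryLM (i j : q) : Matrix q q ℝ →ₗ[ℝ] ℝ where
  toFun A := A i j
  map_add' _ _ := rfl
  map_smul' _ _ := rfl

private theorem entry_hasDerivAt_of_linfty {f : ℝ → Matrix q q ℝ} {f' : Matrix q q ℝ} {t : ℝ}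
    (h : HasDerivAt f f' t) (i j : q) :
    HasDerivAt (fun s => f s i j) (f' i j) t := by
  have := ((entryLM i j).toContinuousLinearMap.hasFDerivAt (x := f t)).comp_hasDerivAt t h
  exact this

private theorem hasDerivAt_linfty_of_entry {f : ℝ → Matrix q q ℝ} {f' : Matrix q q ℝ} {t : ℝ}
    (h : ∀ i j, HasDerivAt (fun s => f s i j) (f' i j) t) :
    HasDerivAt f f' t := by
  have : HasDerivAt (fun s => ∑ i : q, ∑ j : q, Matrix.single i j (f s i j))
      (∑ i : q, ∑ j : q, Matrix.single i j (f' i j)) t := by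
    refine HasDerivAt.fun_sum fun i _ => HasDerivAt.fun_sum fun j _ => ?_
    have hsm : ∀ (A : ℝ → ℝ) (A' : ℝ), HasDerivAt A A' t →
        HasDerivAt (fun s => Matrix.single i j (A s)) (Matrix.single i j A') t := by
      intro A A' hA
      have h2 : ∀ r : ℝ, Matrix.single i j r = r • Matrix.single i j (1:ℝ) := by
        intro r; rw [Matrix.smul_single, smul_eq_mul, mul_one]
      have hf : (fun s => Matrix.single i j (A s)) = fun s => A s • Matrix.single i j (1:ℝ) := by
        funext s; rw [h2]
      rw [hf, h2 A']
      exact hA.smul_const (Matrix.single i j (1:ℝ))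
    exact hsm _ _ (h i j)
  simpa only [← matrix_eq_sum_single] using this

theorem entry_exp_smul_deriv (P : Matrix q q ℝ) (t : ℝ) (i j : q) :
    HasDerivAt (fun u : ℝ => NormedSpace.exp (u • P) i j)
      ((P * NormedSpace.exp (t • P)) i j) t :=
  entry_hasDerivAt_of_linfty (hasDerivAt_exp_smul_const' P t) i j

theorem entry_inv_deriv {M : ℝ → Matrix q q ℝ} {M' : Matrix q q ℝ} {t : ℝ}
    (hM : ∀ i j, HasDerivAt (fun s => M s i j) (M' i j) t) (hu : IsUnit (M t)) (i j : q) :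
    HasDerivAt (fun s => (M s)⁻¹ i j) ((-((M t)⁻¹ * M' * (M t)⁻¹)) i j) t := by
  have hMd : HasDerivAt M M' t := hasDerivAt_linfty_of_entry hM
  have hinv := (hasFDerivAt_ringInverse (𝕜 := ℝ) hu.unit).comp_hasDerivAt t hMd
  have heq : (fun s => Ring.inverse (M s)) = fun s => (M s)⁻¹ := by
    funext s; rw [Matrix.nonsing_inv_eq_ringInverse]
  have ha : (↑hu.unit⁻¹ : Matrix q q ℝ) = (M t)⁻¹ := by
    rw [Matrix.coe_units_inv, hu.unit_spec]
  simp only [Function.comp_def, heq, ContinuousLinearMap.neg_apply,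
    ContinuousLinearMap.mulLeftRight_apply, ha] at hinv
  exact entry_hasDerivAt_of_linfty hinv i j

end linftyAux

attribute [local instance] Matrix.normedAddCommGroup Matrix.normedSpace

section piAux
variable {m l p : Type*} [Fintype m] [Fintype l] [Fintype p]

theorem hasDerivAt_matrix {f : ℝ → Matrix m l ℝ} {f' : Matrix m l ℝ} {t : ℝ} :
    HasDerivAt f f' t ↔ ∀ i j, HasDerivAt (fun s => f s i j) (f' i j) t := by
  constructor
  · intro h i j
    exact hasDerivAt_pi.1 (hasDerivAt_pi.1 h i) j
  · intro h
    exact hasDerivAt_pi.2 fun i => hasDerivAt_pi.2 (h i)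

theorem HasDerivAt.matmul {A : ℝ → Matrix m l ℝ} {B : ℝ → Matrix l p ℝ}
    {A' : Matrix m l ℝ} {B' : Matrix l p ℝ} {t : ℝ}
    (hA : HasDerivAt A A' t) (hB : HasDerivAt B B' t) :
    HasDerivAt (fun s => A s * B s) (A' * B t + A t * B') t := by
  rw [hasDerivAt_matrix] at hA hB ⊢
  intro i j
  simp only [Matrix.mul_apply, Matrix.add_apply]
  have : ∀ k, HasDerivAt (fun s => A s i k * B s k j)
      (A' i k * B t k j + A t i k * B' k j) t := fun k => (hA i k).mul (hB k j)
  simpa [Finset.sum_add_distrib] using HasDerivAt.fun_sum (fun k _ => this k)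

theorem HasDerivAt.mulVec_const {A : ℝ → Matrix m l ℝ} {A' : Matrix m l ℝ} {t : ℝ}
    (hA : HasDerivAt A A' t) (v : l → ℝ) :
    HasDerivAt (fun s => A s *ᵥ v) (A' *ᵥ v) t := by
  rw [hasDerivAt_pi]
  intro i
  simp only [Matrix.mulVec, dotProduct]
  exact HasDerivAt.fun_sum fun k _ => (hasDerivAt_matrix.1 hA i k).mul_const (v k)

end piAux

/-- Explicit solution of the linear terminal-value ODE for the offset term in
the affine ansatz: `D⁰(t) = −(LΦ(t)E₂)⁻¹ L (∫ₜᵀ Φ(s) ds) v` with `v = (F⁰; 0)`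
satisfies `D⁰(T) = 0` and `(D⁰)' = (φ₁₁ − Dφ₀₁)D⁰ − DF⁰` on `[0,T]`. -/
theorem riccati_offset_explicit_solution
    (T : ℝ) (hT : 0 < T) (n : ℕ)
    (φ00 φ01 φ10 φ11 DT : Matrix (Fin n) (Fin n) ℝ) (F0 : Fin n → ℝ)
    (P : Matrix (Fin n ⊕ Fin n) (Fin n ⊕ Fin n) ℝ)
    (hP : P = Matrix.fromBlocks φ00 φ01 φ10 φ11)
    (Φ : ℝ → Matrix (Fin n ⊕ Fin n) (Fin n ⊕ Fin n) ℝ)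
    (hΦ : ∀ t, Φ t = NormedSpace.exp ((T - t) • P))
    (L : Matrix (Fin n) (Fin n ⊕ Fin n) ℝ)
    (hL : L = Matrix.fromCols DT (-(1 : Matrix (Fin n) (Fin n) ℝ)))
    (E₁ E₂ : Matrix (Fin n ⊕ Fin n) (Fin n) ℝ)
    (hE₁ : E₁ = Matrix.fromRows (1 : Matrix (Fin n) (Fin n) ℝ) 0)
    (hE₂ : E₂ = Matrix.fromRows 0 (1 : Matrix (Fin n) (Fin n) ℝ))
    (M : ℝ → Matrix (Fin n) (Fin n) ℝ)
    (hM : ∀ t, M t = L * Φ t * E₂)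
    (hMinv : ∀ t ∈ Set.Icc (0 : ℝ) T, IsUnit (M t))
    (D : ℝ → Matrix (Fin n) (Fin n) ℝ)
    (hD : ∀ t, D t = -((M t)⁻¹ * L * Φ t * E₁))
    (v : Fin n ⊕ Fin n → ℝ) (hv : v = Sum.elim F0 0)
    (D0 : ℝ → (Fin n → ℝ))
    (hD0 : ∀ t, D0 t = -(((M t)⁻¹ * L * ∫ s in t..T, Φ s) *ᵥ v)) :
    D0 T = 0 ∧
      ∀ t ∈ Set.Icc (0 : ℝ) T,
        HasDerivAt D0 ((φ11 - D t * φ01) *ᵥ D0 t - D t *ᵥ F0) t := by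
  -- derivative of Φ
  have hΦ' : ∀ s, HasDerivAt Φ (-(P * Φ s)) s := by
    intro s
    have hexp : HasDerivAt (fun u : ℝ => NormedSpace.exp (u • P))
        (P * NormedSpace.exp ((T - s) • P)) (T - s) :=
      hasDerivAt_matrix.2 fun i j => entry_exp_smul_deriv P (T - s) i j
    have haff : HasDerivAt (fun u : ℝ => T - u) (-1 : ℝ) s := by
      simpa using (hasDerivAt_id s).const_sub T
    have := hexp.scomp s haff
    simp only [neg_one_smul] at this
    have hfun : (fun u : ℝ => NormedSpace.exp ((T - u) • P)) = Φ := by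
      funext u; rw [hΦ u]
    rw [hΦ s]
    rw [← hfun]
    exact this
  have hΦc : Continuous Φ :=
    continuous_iff_continuousAt.2 fun s => (hΦ' s).continuousAt
  constructor
  · rw [hD0 T, intervalIntegral.integral_same, Matrix.mul_zero, Matrix.zero_mulVec, neg_zero]
  · intro t ht
    set Ψ : ℝ → Matrix (Fin n ⊕ Fin n) (Fin n ⊕ Fin n) ℝ := fun s => ∫ u in s..T, Φ u with hΨdef
    have hΨ' : HasDerivAt Ψ (-(Φ t)) t :=
      intervalIntegral.integral_hasDerivAt_left
        (hΦc.intervalIntegrable t T)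
        (by haveI : TopologicalSpace.PseudoMetrizableSpace (Matrix (Fin n ⊕ Fin n) (Fin n ⊕ Fin n) ℝ) := inferInstanceAs (TopologicalSpace.PseudoMetrizableSpace (Fin n ⊕ Fin n → Fin n ⊕ Fin n → ℝ)); exact hΦc.stronglyMeasurableAtFilter _ _)
        hΦc.continuousAt
    have hMd : HasDerivAt M (L * -(P * Φ t) * E₂) t := by
      have h1 : HasDerivAt (fun s => L * Φ s * E₂) (L * -(P * Φ t) * E₂) t := by
        have := ((hasDerivAt_const t L).matmul (hΦ' t)).matmul
          (hasDerivAt_const t (E₂ : Matrix (Fin n ⊕ Fin n) (Fin n) ℝ))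
        simpa using this
      have : M = fun s => L * Φ s * E₂ := funext hM
      rw [this]; exact h1
    have hut : IsUnit (M t) := hMinv t ht
    have hGd : HasDerivAt (fun s => (M s)⁻¹)
        (-((M t)⁻¹ * (L * -(P * Φ t) * E₂) * (M t)⁻¹)) t :=
      hasDerivAt_matrix.2 fun i j => entry_inv_deriv (hasDerivAt_matrix.1 hMd) hut i j
    -- W = (M s)⁻¹ * L * Ψ s
    have hWd : HasDerivAt (fun s => (M s)⁻¹ * L * Ψ s)
        ((-((M t)⁻¹ * (L * -(P * Φ t) * E₂) * (M t)⁻¹) * L) * Ψ t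
          + ((M t)⁻¹ * L) * -(Φ t)) t := by
      have hGL : HasDerivAt (fun s => (M s)⁻¹ * L)
          (-((M t)⁻¹ * (L * -(P * Φ t) * E₂) * (M t)⁻¹) * L) t := by
        have := hGd.matmul (hasDerivAt_const t L)
        simpa using this
      exact hGL.matmul hΨ'
    have hD0d : HasDerivAt D0
        (-(((-((M t)⁻¹ * (L * -(P * Φ t) * E₂) * (M t)⁻¹) * L) * Ψ t
          + ((M t)⁻¹ * L) * -(Φ t)) *ᵥ v)) t := by
      have := (hWd.mulVec_const v).neg
      have hfun : (fun s => -(((M s)⁻¹ * L * Ψ s) *ᵥ v)) = D0 := by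
        funext s; rw [hD0 s]
      rw [← hfun]
      exact this
    -- final algebra
    have hAM : (M t)⁻¹ * M t = 1 :=
      Matrix.nonsing_inv_mul (M t) ((Matrix.isUnit_iff_isUnit_det _).1 hut)
    have hcom : Φ t * P = P * Φ t := by
      rw [hΦ t]
      exact (((Commute.refl P).smul_left ((T : ℝ) - t)).exp_left).eq
    have hPE₂ : P * E₂ = E₁ * φ01 + E₂ * φ11 := by
      rw [hP, hE₁, hE₂, Matrix.fromBlocks_mul_fromRows, Matrix.fromRows_mul,
        Matrix.fromRows_mul]
      ext (i | i) j <;> simp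
    have hvE : v = E₁ *ᵥ F0 := by
      rw [hv, hE₁, Matrix.fromRows_mulVec, Matrix.one_mulVec, Matrix.zero_mulVec]
    have hDexpr : (M t)⁻¹ * L * Φ t * E₁ = -(D t) := by rw [hD t, neg_neg]
    have hD0expr : ((M t)⁻¹ * L * Ψ t) *ᵥ v = -(D0 t) := by rw [hD0 t, neg_neg]
    -- helper vector identities
    have hDvec : ∀ x : Fin n → ℝ,
        (M t)⁻¹ *ᵥ (L *ᵥ (Φ t *ᵥ (E₁ *ᵥ x))) = -(D t *ᵥ x) := by
      intro x
      simp only [Matrix.mulVec_mulVec]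
      have hDr : (M t)⁻¹ * (L * (Φ t * E₁)) = -(D t) := by
        rw [hD t, neg_neg]; simp only [Matrix.mul_assoc]
      rw [hDr, Matrix.neg_mulVec]
    have hMvec : ∀ x : Fin n → ℝ,
        (M t)⁻¹ *ᵥ (L *ᵥ (Φ t *ᵥ (E₂ *ᵥ x))) = x := by
      intro x
      simp only [Matrix.mulVec_mulVec]
      have hMr : (M t)⁻¹ * (L * (Φ t * E₂)) = 1 := by
        rw [show L * (Φ t * E₂) = M t from by rw [hM t, Matrix.mul_assoc], hAM]
      rw [hMr, Matrix.one_mulVec]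
    have hD0vec : (M t)⁻¹ *ᵥ (L *ᵥ (Ψ t *ᵥ (E₁ *ᵥ F0))) = -(D0 t) := by
      rw [hD0 t, hvE, neg_neg]
      simp only [Matrix.mulVec_mulVec, Matrix.mul_assoc]
      rfl
    have hval : -(((-((M t)⁻¹ * (L * -(P * Φ t) * E₂) * (M t)⁻¹) * L) * Ψ t
          + ((M t)⁻¹ * L) * -(Φ t)) *ᵥ v)
        = (φ11 - D t * φ01) *ᵥ D0 t - D t *ᵥ F0 := by
      rw [hvE]
      simp only [Matrix.mul_neg, Matrix.neg_mul, neg_neg, ← hcom, Matrix.mul_assoc]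
      rw [show P * (E₂ * ((M t)⁻¹ * (L * Ψ t)))
          = E₁ * (φ01 * ((M t)⁻¹ * (L * Ψ t))) + E₂ * (φ11 * ((M t)⁻¹ * (L * Ψ t))) from by
        simp only [← Matrix.mul_assoc]
        rw [hPE₂]
        simp only [Matrix.add_mul]]
      simp only [Matrix.mul_add, Matrix.add_mul, Matrix.mul_assoc, Matrix.add_mulVec,
        Matrix.mulVec_add, Matrix.sub_mulVec, ← Matrix.mulVec_mulVec, Matrix.neg_mulVec,
        Matrix.mulVec_neg, neg_neg]
      rw [hD0vec]
      simp only [Matrix.mulVec_neg, Matrix.mulVec_add, neg_neg, hDvec, hMvec]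
      abel
    rw [hval] at hD0d
    exact hD0d
end

section
/- Let T > 0, n ∈ ℕ, φ₀₀, φ₀₁, φ₁₀, φ₁₁, D_T ∈ Mₙ(ℝ), F⁰ ∈ ℝⁿ, and F₀ ∈ ℝⁿ. Suppose D : [0,T] → Mₙ(ℝ) and D⁰ : [0,T] → ℝⁿ are continuously differentiable with D(T) = D_T, D′ = −D φ₀₁ D − D φ₀₀ + φ₁₁ D + φ₁₀, D⁰(T) = 0, and (D⁰)′ = (φ₁₁ − D φ₀₁) D⁰ − D F⁰ on [0,T]. Suppose 𝔽 : [0,T] → ℝⁿ is differentiable with 𝔽(0) = F₀ and 𝔽′ = (φ₀₀ + φ₀₁ D) 𝔽 + φ₀₁ D⁰ + F⁰ on [0,T]. Then 𝔹 := D𝔽 + D⁰ satisfies 𝔽′ = φ₀₀ 𝔽 + φ₀₁ 𝔹 + F⁰ and 𝔹′ = φ₁₀ 𝔽 + φ₁₁ 𝔹 on [0,T], together with the terminal condition 𝔹(T) = D_T 𝔽(T). -/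
open Matrix Set

attribute [local instance] Matrix.normedAddCommGroup Matrix.normedSpace


noncomputable def mulVecCLM (n : ℕ) :
    Matrix (Fin n) (Fin n) ℝ →L[ℝ] (Fin n → ℝ) →L[ℝ] (Fin n → ℝ) :=
  LinearMap.toContinuousLinearMap
    { toFun := fun A => LinearMap.toContinuousLinearMap A.mulVecLin
      map_add' := by intro A B; ext v; simp [Matrix.add_mulVec]
      map_smul' := by intro c A; ext v; simp [Matrix.smul_mulVec] }

@[simp] lemma mulVecCLM_apply (n : ℕ) (A : Matrix (Fin n) (Fin n) ℝ) (v : Fin n → ℝ) :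
    mulVecCLM n A v = A *ᵥ v := rfl

/-- Verification of the affine ansatz `𝔹 = D𝔽 + D⁰`: if `D` solves the matrix
Riccati terminal value problem, `D⁰` the associated linear terminal value
problem, and `𝔽` the closed-loop forward ODE, then `(𝔽, 𝔹)` solves the linear
forward–backward system with terminal condition `𝔹(T) = D_T 𝔽(T)`. -/
theorem affine_ansatz_verification
    (T : ℝ) (hT : 0 < T) (n : ℕ)
    (φ00 φ01 φ10 φ11 DT : Matrix (Fin n) (Fin n) ℝ)
    (F0vec F₀ : Fin n → ℝ)
    (D : ℝ → Matrix (Fin n) (Fin n) ℝ) (D0 : ℝ → (Fin n → ℝ))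
    (𝔽 : ℝ → (Fin n → ℝ))
    (hDT : D T = DT)
    (hD : ∀ t ∈ Set.Icc (0 : ℝ) T,
      HasDerivWithinAt D (-(D t * φ01 * D t) - D t * φ00 + φ11 * D t + φ10)
        (Set.Icc (0 : ℝ) T) t)
    (hD0T : D0 T = 0)
    (hD0 : ∀ t ∈ Set.Icc (0 : ℝ) T,
      HasDerivWithinAt D0 ((φ11 - D t * φ01) *ᵥ D0 t - D t *ᵥ F0vec)
        (Set.Icc (0 : ℝ) T) t)
    (h𝔽0 : 𝔽 0 = F₀)
    (h𝔽 : ∀ t ∈ Set.Icc (0 : ℝ) T,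
      HasDerivWithinAt 𝔽 ((φ00 + φ01 * D t) *ᵥ 𝔽 t + φ01 *ᵥ D0 t + F0vec)
        (Set.Icc (0 : ℝ) T) t)
    (𝔹 : ℝ → (Fin n → ℝ))
    (h𝔹 : ∀ t, 𝔹 t = D t *ᵥ 𝔽 t + D0 t) :
    (∀ t ∈ Set.Icc (0 : ℝ) T,
        HasDerivWithinAt 𝔽 (φ00 *ᵥ 𝔽 t + φ01 *ᵥ 𝔹 t + F0vec)
          (Set.Icc (0 : ℝ) T) t ∧
        HasDerivWithinAt 𝔹 (φ10 *ᵥ 𝔽 t + φ11 *ᵥ 𝔹 t)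
          (Set.Icc (0 : ℝ) T) t) ∧
      𝔹 T = DT *ᵥ 𝔽 T := by
  constructor
  · intro t ht
    constructor
    · have h := h𝔽 t ht
      convert h using 1
      simp only [h𝔹, Matrix.add_mulVec, Matrix.mulVec_add, ← Matrix.mulVec_mulVec]
      abel
    · have hDt := hD t ht
      have hmat : HasDerivWithinAt (fun s => mulVecCLM n (D s))
          (mulVecCLM n (-(D t * φ01 * D t) - D t * φ00 + φ11 * D t + φ10))
          (Set.Icc (0 : ℝ) T) t :=
        (mulVecCLM n).hasFDerivAt.comp_hasDerivWithinAt t hDt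
      have hprod := hmat.clm_apply (h𝔽 t ht)
      have hB := hprod.add (hD0 t ht)
      have heq : 𝔹 = fun s => mulVecCLM n (D s) (𝔽 s) + D0 s := by
        funext s; simp [h𝔹]
      rw [heq]
      refine hB.congr_deriv ?_
      simp only [mulVecCLM_apply, h𝔹, Matrix.add_mulVec, Matrix.sub_mulVec,
        Matrix.mulVec_add, Matrix.mulVec_sub, Matrix.neg_mulVec, ← Matrix.mulVec_mulVec]
      abel
  · rw [h𝔹, hDT, hD0T, add_zero]
end

section
/- Let T > 0, n ∈ ℕ, φ₀₀, φ₀₁, φ₁₀, φ₁₁, D_T ∈ Mₙ(ℝ), and F⁰ ∈ ℝⁿ. Let 𝒫 ∈ M₂ₙ(ℝ) be the block matrix with blocks [[φ₀₀, φ₀₁], [φ₁₀, φ₁₁]], Φ(t) := exp((T−t)𝒫), L := (D_T | −Iₙ), E₁ := (Iₙ ; 0ₙ), E₂ := (0ₙ ; Iₙ), M(t) := L Φ(t) E₂, and assume M(t) is invertible for every t ∈ [0,T]. Define D(t) := −M(t)⁻¹ L Φ(t) E₁ and D⁰(t) := −M(t)⁻¹ L (∫ₜᵀ Φ(s) ds)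 v with v := (F⁰ ; 0) ∈ ℝ²ⁿ. Suppose (𝔽, 𝔹) : [0,T] → ℝⁿ × ℝⁿ is continuously differentiable with 𝔽′ = φ₀₀ 𝔽 + φ₀₁ 𝔹 + F⁰, 𝔹′ = φ₁₀ 𝔽 + φ₁₁ 𝔹 on [0,T], and 𝔹(T) = D_T 𝔽(T). Then 𝔹(t) = D(t) 𝔽(t) + D⁰(t) for every t ∈ [0,T]. -/
open Matrix Set

section linftyAux
attribute [local instance] Matrix.linftyOpNormedRing Matrix.linftyOpNormedAlgebra

lemma aux_exp_entry_hasDerivAt {m : Type*} [Fintype m] [DecidableEq m]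
    (T : ℝ) (P : Matrix m m ℝ) (t : ℝ) (i j : m) :
    HasDerivAt (fun t : ℝ => NormedSpace.exp ((T - t) • P) i j)
      ((-(P * NormedSpace.exp ((T - t) • P))) i j) t := by
  have h1 : HasDerivAt (fun u : ℝ => NormedSpace.exp (u • P))
      (P * NormedSpace.exp ((T - t) • P)) (T - t) :=
    hasDerivAt_exp_smul_const' P (T - t)
  have h2 : HasDerivAt (fun t : ℝ => T - t) (-1) t := by
    simpa using (hasDerivAt_id t).const_sub T
  have h3 := h1.scomp t h2
  let e : Matrix m m ℝ →ₗ[ℝ] ℝ :=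
    (LinearMap.proj (φ := fun _ : m => ℝ) j).comp (LinearMap.proj (φ := fun _ : m => m → ℝ) i)
  have h4 := (e.toContinuousLinearMap.hasFDerivAt).comp_hasDerivAt t h3
  convert h4 using 1
  any_goals rfl
  simp [e]
  rfl

lemma aux_exp_comm {m : Type*} [Fintype m] [DecidableEq m] (u : ℝ) (P : Matrix m m ℝ) :
    P * NormedSpace.exp (u • P) = NormedSpace.exp (u • P) * P :=
  (((Commute.refl P).smul_right u).exp_right).eq

end linftyAux

attribute [local instance] Matrix.normedAddCommGroup Matrix.normedSpace



lemma aux_exp_hasDerivAt {m : Type*} [Fintype m] [DecidableEq m]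
    (T : ℝ) (P : Matrix m m ℝ) (t : ℝ) :
    HasDerivAt (fun t : ℝ => NormedSpace.exp ((T - t) • P))
      (-(P * NormedSpace.exp ((T - t) • P))) t :=
  hasDerivAt_pi.2 fun i => hasDerivAt_pi.2 fun j => aux_exp_entry_hasDerivAt T P t i j

lemma aux_mulVec_deriv {m p : Type*} [Fintype m] [Fintype p]
    {A : ℝ → Matrix m p ℝ} {A' : Matrix m p ℝ} {x : ℝ → p → ℝ} {x' : p → ℝ}
    {s : Set ℝ} {t : ℝ}
    (hA : HasDerivWithinAt A A' s t) (hx : HasDerivWithinAt x x' s t) :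
    HasDerivWithinAt (fun u => A u *ᵥ x u) (A' *ᵥ x t + A t *ᵥ x') s t := by
  refine hasDerivWithinAt_pi.2 fun i => ?_
  have hAij : ∀ j, HasDerivWithinAt (fun u => A u i j) (A' i j) s t := fun j =>
    hasDerivWithinAt_pi.1 (hasDerivWithinAt_pi.1 hA i) j
  have hxj : ∀ j, HasDerivWithinAt (fun u => x u j) (x' j) s t := fun j =>
    hasDerivWithinAt_pi.1 hx j
  have h := HasDerivWithinAt.sum (u := Finset.univ)
    (A := fun j u => A u i j * x u j)
    (A' := fun j => A' i j * x t j + A t i j * x' j)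
    (fun j _ => (hAij j).mul (hxj j))
  convert h using 1
  all_goals simp [mulVec, dotProduct, Finset.sum_add_distrib, Finset.sum_fn]


/-- Every solution of the linear forward–backward two-point boundary value
problem `𝔽' = φ₀₀𝔽 + φ₀₁𝔹 + F⁰`, `𝔹' = φ₁₀𝔽 + φ₁₁𝔹`, `𝔹(T) = D_T 𝔽(T)`
satisfies the affine relation `𝔹 = D𝔽 + D⁰` with `D` and `D⁰` given by the
explicit formulas in terms of the fundamental solution `Φ(t) = exp((T−t)𝒫)`. -/
theorem fbode_affine_relation
    (T : ℝ) (hT : 0 < T) (n : ℕ)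
    (φ00 φ01 φ10 φ11 DT : Matrix (Fin n) (Fin n) ℝ) (F0 : Fin n → ℝ)
    (P : Matrix (Fin n ⊕ Fin n) (Fin n ⊕ Fin n) ℝ)
    (hP : P = Matrix.fromBlocks φ00 φ01 φ10 φ11)
    (Φ : ℝ → Matrix (Fin n ⊕ Fin n) (Fin n ⊕ Fin n) ℝ)
    (hΦ : ∀ t, Φ t = NormedSpace.exp ((T - t) • P))
    (L : Matrix (Fin n) (Fin n ⊕ Fin n) ℝ)
    (hL : L = Matrix.fromCols DT (-(1 : Matrix (Fin n) (Fin n) ℝ)))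
    (E₁ E₂ : Matrix (Fin n ⊕ Fin n) (Fin n) ℝ)
    (hE₁ : E₁ = Matrix.fromRows (1 : Matrix (Fin n) (Fin n) ℝ) 0)
    (hE₂ : E₂ = Matrix.fromRows 0 (1 : Matrix (Fin n) (Fin n) ℝ))
    (M : ℝ → Matrix (Fin n) (Fin n) ℝ)
    (hM : ∀ t, M t = L * Φ t * E₂)
    (hMinv : ∀ t ∈ Set.Icc (0 : ℝ) T, IsUnit (M t))
    (D : ℝ → Matrix (Fin n) (Fin n) ℝ)
    (hD : ∀ t, D t = -((M t)⁻¹ * L * Φ t * E₁))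
    (v : Fin n ⊕ Fin n → ℝ) (hv : v = Sum.elim F0 0)
    (D0 : ℝ → (Fin n → ℝ))
    (hD0 : ∀ t, D0 t = -(((M t)⁻¹ * L * ∫ s in t..T, Φ s) *ᵥ v))
    (𝔽 𝔹 : ℝ → (Fin n → ℝ))
    (h𝔽 : ∀ t ∈ Set.Icc (0 : ℝ) T,
      HasDerivWithinAt 𝔽 (φ00 *ᵥ 𝔽 t + φ01 *ᵥ 𝔹 t + F0) (Set.Icc (0 : ℝ) T) t)
    (h𝔹 : ∀ t ∈ Set.Icc (0 : ℝ) T,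
      HasDerivWithinAt 𝔹 (φ10 *ᵥ 𝔽 t + φ11 *ᵥ 𝔹 t) (Set.Icc (0 : ℝ) T) t)
    (h𝔹T : 𝔹 T = DT *ᵥ 𝔽 T) :
    ∀ t ∈ Set.Icc (0 : ℝ) T, 𝔹 t = D t *ᵥ 𝔽 t + D0 t := by
  have hΦ' : Φ = fun t => NormedSpace.exp ((T - t) • P) := funext hΦ
  have hΦd : ∀ t : ℝ, HasDerivAt Φ (-(P * Φ t)) t := by
    intro t; rw [hΦ']; exact aux_exp_hasDerivAt T P t
  have hΦc : Continuous Φ := continuous_iff_continuousAt.2 fun t => (hΦd t).continuousAt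
  set X : ℝ → (Fin n ⊕ Fin n → ℝ) := fun t => Sum.elim (𝔽 t) (𝔹 t) with hX
  have hXd : ∀ t ∈ Set.Icc (0:ℝ) T,
      HasDerivWithinAt X (P *ᵥ X t + v) (Set.Icc (0:ℝ) T) t := by
    intro t ht
    refine hasDerivWithinAt_pi.2 fun i => ?_
    cases i with
    | inl k =>
        have h := hasDerivWithinAt_pi.1 (h𝔽 t ht) k
        convert h using 1
        show (P *ᵥ X t) _ + v _ = _
        simp [hX, hP, hv, Matrix.fromBlocks_mulVec]
        rfl
    | inr k =>
        have h := hasDerivWithinAt_pi.1 (h𝔹 t ht) k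
        convert h using 1
        show (P *ᵥ X t) _ + v _ = _
        simp [hX, hP, hv, Matrix.fromBlocks_mulVec]
        rfl
  have hId : ∀ t : ℝ, HasDerivAt (fun u => ∫ s in u..T, Φ s) (-(Φ t)) t := by
    intro t
    haveI : TopologicalSpace.PseudoMetrizableSpace (Matrix (Fin n ⊕ Fin n) (Fin n ⊕ Fin n) ℝ) :=
      inferInstanceAs (TopologicalSpace.PseudoMetrizableSpace (Fin n ⊕ Fin n → Fin n ⊕ Fin n → ℝ))
    exact intervalIntegral.integral_hasDerivAt_left (hΦc.intervalIntegrable t T)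
      (hΦc.stronglyMeasurableAtFilter _ _) hΦc.continuousAt
  set g : ℝ → Fin n → ℝ :=
    fun u => L *ᵥ (Φ u *ᵥ X u) + L *ᵥ ((∫ s in u..T, Φ s) *ᵥ v) with hg
  have hgd : ∀ t ∈ Set.Icc (0:ℝ) T, HasDerivWithinAt g 0 (Set.Icc (0:ℝ) T) t := by
    intro t ht
    have h1 := aux_mulVec_deriv (hΦd t).hasDerivWithinAt (hXd t ht)
    have h2 := aux_mulVec_deriv (hasDerivWithinAt_const t _ L) h1
    have h3 := aux_mulVec_deriv (s := Set.Icc (0:ℝ) T) ((hId t).hasDerivWithinAt)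
      (hasDerivWithinAt_const t (Set.Icc (0:ℝ) T) v)
    have h4 := aux_mulVec_deriv (hasDerivWithinAt_const t _ L) h3
    have h5 := h2.add h4
    convert h5 using 1
    any_goals rfl
    have hcomm : P * Φ t = Φ t * P := by rw [hΦ']; exact aux_exp_comm _ _
    simp [Matrix.zero_mulVec, Matrix.mulVec_zero, Matrix.mulVec_add,
      Matrix.neg_mulVec, Matrix.mulVec_mulVec, ← hcomm, Matrix.mulVec_neg]
  have hgT : g T = 0 := by
    have h1 : Φ T = 1 := by rw [hΦ']; simp
    simp [hg, h1, hX, intervalIntegral.integral_same, Matrix.one_mulVec, hL,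
      h𝔹T, Matrix.zero_mulVec, Matrix.mulVec_zero, Matrix.neg_mulVec,
      Matrix.fromCols_mulVec_sumElim]
  have hg0 : ∀ t ∈ Set.Icc (0:ℝ) T, g t = 0 := by
    intro t ht
    have hTmem : T ∈ Set.Icc (0:ℝ) T := ⟨hT.le, le_refl T⟩
    have hb := (convex_Icc (0:ℝ) T).norm_image_sub_le_of_norm_hasDerivWithin_le
      (C := 0) (f' := fun _ => (0 : Fin n → ℝ)) hgd (fun x hx => by simp) hTmem ht
    have : g t - g T = 0 := by
      refine norm_le_zero_iff.1 ?_
      simpa using hb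
    rw [hgT] at this
    simpa using this
  intro t ht
  have hXsplit : X t = E₁ *ᵥ 𝔽 t + E₂ *ᵥ 𝔹 t := by
    rw [hE₁, hE₂]; ext i; cases i <;> simp [hX]
  have key : (L * Φ t * E₁) *ᵥ 𝔽 t + M t *ᵥ 𝔹 t
      + (L * ∫ s in t..T, Φ s) *ᵥ v = 0 := by
    have h := hg0 t ht
    rw [hg] at h
    simp only [hXsplit, Matrix.mulVec_add, Matrix.mulVec_mulVec, hM t,
      Matrix.mul_assoc] at h ⊢
    convert h using 1
  have hMt := hMinv t ht
  have hinv : (M t)⁻¹ * M t = 1 :=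
    Matrix.nonsing_inv_mul _ ((Matrix.isUnit_iff_isUnit_det _).1 hMt)
  have hB : 𝔹 t = (M t)⁻¹ *ᵥ (M t *ᵥ 𝔹 t) := by
    rw [Matrix.mulVec_mulVec, hinv, Matrix.one_mulVec]
  have hMB : M t *ᵥ 𝔹 t = -((L * Φ t * E₁) *ᵥ 𝔽 t)
      - (L * ∫ s in t..T, Φ s) *ᵥ v := by
    have h := key
    ext i
    have h2 := congrFun h i
    simp at h2 ⊢
    linarith
  rw [hB, hMB, hD, hD0]
  simp [sub_eq_add_neg, Matrix.mulVec_add, Matrix.mulVec_neg, Matrix.neg_mulVec,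
    Matrix.mulVec_mulVec, Matrix.mul_assoc]
end

section
/- Let T > 0, a, b₁, b₂ ≥ 0, and ρ̂, θ₁, θ₂, θ₃ > 0, and let Θ := (1,0) ∈ ℝ². Let A : [0,T] → M₂(ℝ) be continuous with ‖A(t) y‖ ≤ a ‖y‖ and ⟨y, A(t) y⟩ ≥ ρ̂ ‖y‖² for all t ∈ [0,T] and y ∈ ℝ², and let B⁽¹⁾, B⁽²⁾ : [0,T] → ℝ² be continuous with ‖B⁽¹⁾(t)‖ ≤ b₁ and ‖B⁽²⁾(t)‖ ≤ b₂ for all t. Let u, v : [0,T] → ℝ be continuous and let S : [0,T] → ℝ² be differentiable with S(0) = 0 and S′(t) = −A(t) S(t) + B⁽¹⁾(t) u(t) + B⁽²⁾(t) v(t). Then, with c := a²/(2θ₁ρ̂²) + 1/(2θ₂), ∫₀ᵀ v(t) ⟨Θ, −A(t) S(t) + B⁽¹⁾(t) u(t) + B⁽²⁾(t) v(t)⟩ dt ≤ ((θ₁+θ₂)/2 + b₂² (1 + 1/θ₃) c) ∫₀ᵀ v(t)² dt + (1+θ₃) b₁² c ∫₀ᵀ u(t)² dt. -/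
open Matrix Set intervalIntegral

lemma young_scalar (θ p q : ℝ) (hθ : 0 < θ) :
    p * q ≤ θ / 2 * p ^ 2 + 1 / (2 * θ) * q ^ 2 := by
  rw [← sub_nonneg]
  have h : θ / 2 * p ^ 2 + 1 / (2 * θ) * q ^ 2 - p * q = (θ * p - q) ^ 2 / (2 * θ) := by
    field_simp; ring
  rw [h]; positivity

lemma young_dot (θ : ℝ) (hθ : 0 < θ) (x y : Fin 2 → ℝ) :
    x ⬝ᵥ y ≤ θ / 2 * (x ⬝ᵥ x) + 1 / (2 * θ) * (y ⬝ᵥ y) := by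
  simp only [dotProduct, Fin.sum_univ_two]
  have h0 := young_scalar θ (x 0) (y 0) hθ
  have h1 := young_scalar θ (x 1) (y 1) hθ
  nlinarith [h0, h1]

lemma sum_sq_dot (θ : ℝ) (hθ : 0 < θ) (x y : Fin 2 → ℝ) :
    (x + y) ⬝ᵥ (x + y) ≤ (1 + θ) * (x ⬝ᵥ x) + (1 + 1 / θ) * (y ⬝ᵥ y) := by
  simp only [dotProduct, Fin.sum_univ_two, Pi.add_apply]
  have h0 := young_scalar θ (x 0) (y 0) hθ
  have h1 := young_scalar θ (x 1) (y 1) hθ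
  have hθ' : θ ≠ 0 := ne_of_gt hθ
  have key : 1 / (2 * θ) * 2 = 1 / θ := by field_simp
  nlinarith [h0, h1]

lemma comp_sq_le_dot (z : Fin 2 → ℝ) (i : Fin 2) : (z i) ^ 2 ≤ z ⬝ᵥ z := by
  fin_cases i <;>
  · simp only [dotProduct, Fin.sum_univ_two, Fin.mk_zero, Fin.mk_one]
    nlinarith [sq_nonneg (z 0), sq_nonneg (z 1)]

lemma contOn_dot {s : Set ℝ} {X Y : ℝ → Fin 2 → ℝ} (hX : ContinuousOn X s)
    (hY : ContinuousOn Y s) : ContinuousOn (fun t => X t ⬝ᵥ Y t) s := by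
  simp only [dotProduct, Fin.sum_univ_two]
  exact (((continuous_apply 0).comp_continuousOn hX).mul
      ((continuous_apply 0).comp_continuousOn hY)).add
    (((continuous_apply 1).comp_continuousOn hX).mul
      ((continuous_apply 1).comp_continuousOn hY))

lemma contOn_mulVec {s : Set ℝ} {A : ℝ → Matrix (Fin 2) (Fin 2) ℝ} {X : ℝ → Fin 2 → ℝ}
    (hA : ContinuousOn A s) (hX : ContinuousOn X s) :
    ContinuousOn (fun t => A t *ᵥ X t) s := by
  apply continuousOn_pi.2
  intro i
  exact contOn_dot ((continuous_apply i).comp_continuousOn hA) hX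

lemma hasDerivWithinAt_proj {S : ℝ → Fin 2 → ℝ} {D : Fin 2 → ℝ} {s : Set ℝ} {t : ℝ}
    (h : HasDerivWithinAt S D s t) (i : Fin 2) :
    HasDerivWithinAt (fun t => S t i) (D i) s t :=
  (ContinuousLinearMap.proj (R := ℝ) (φ := fun _ : Fin 2 => ℝ) i).hasFDerivAt.comp_hasDerivWithinAt
    t h

set_option maxHeartbeats 2000000 in
/-- Key estimate in the verification theorem: the cross term in the cost
decomposition is controlled by the quadratic deviation costs via Young's
inequality and the coercivity of `A` (Euclidean norms expressed through dot
products: `‖z‖ ≤ m` is written `z ⬝ᵥ z ≤ m²`). -/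
theorem verification_cross_term_estimate
    (T : ℝ) (hT : 0 < T)
    (a b₁ b₂ : ℝ) (ha : 0 ≤ a) (hb₁ : 0 ≤ b₁) (hb₂ : 0 ≤ b₂)
    (ρhat θ₁ θ₂ θ₃ : ℝ) (hρ : 0 < ρhat) (hθ₁ : 0 < θ₁) (hθ₂ : 0 < θ₂)
    (hθ₃ : 0 < θ₃)
    (Θ : Fin 2 → ℝ) (hΘ : Θ = ![1, 0])
    (A : ℝ → Matrix (Fin 2) (Fin 2) ℝ) (B₁ B₂ : ℝ → (Fin 2 → ℝ))
    (hAc : ContinuousOn A (Set.Icc 0 T))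
    (hB₁c : ContinuousOn B₁ (Set.Icc 0 T)) (hB₂c : ContinuousOn B₂ (Set.Icc 0 T))
    (hAbound : ∀ t ∈ Set.Icc (0 : ℝ) T, ∀ y : Fin 2 → ℝ,
      (A t *ᵥ y) ⬝ᵥ (A t *ᵥ y) ≤ a ^ 2 * (y ⬝ᵥ y))
    (hAcoer : ∀ t ∈ Set.Icc (0 : ℝ) T, ∀ y : Fin 2 → ℝ,
      ρhat * (y ⬝ᵥ y) ≤ y ⬝ᵥ (A t *ᵥ y))
    (hB₁bound : ∀ t ∈ Set.Icc (0 : ℝ) T, B₁ t ⬝ᵥ B₁ t ≤ b₁ ^ 2)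
    (hB₂bound : ∀ t ∈ Set.Icc (0 : ℝ) T, B₂ t ⬝ᵥ B₂ t ≤ b₂ ^ 2)
    (u v : ℝ → ℝ)
    (huc : ContinuousOn u (Set.Icc 0 T)) (hvc : ContinuousOn v (Set.Icc 0 T))
    (S : ℝ → (Fin 2 → ℝ)) (hS0 : S 0 = 0)
    (hS : ∀ t ∈ Set.Icc (0 : ℝ) T,
      HasDerivWithinAt S (-(A t *ᵥ S t) + u t • B₁ t + v t • B₂ t)
        (Set.Icc (0 : ℝ) T) t)
    (c : ℝ) (hc : c = a ^ 2 / (2 * θ₁ * ρhat ^ 2) + 1 / (2 * θ₂)) :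
    (∫ t in (0:ℝ)..T,
        v t * (Θ ⬝ᵥ (-(A t *ᵥ S t) + u t • B₁ t + v t • B₂ t)))
      ≤ ((θ₁ + θ₂) / 2 + b₂ ^ 2 * (1 + 1 / θ₃) * c)
          * (∫ t in (0:ℝ)..T, (v t) ^ 2)
        + (1 + θ₃) * b₁ ^ 2 * c * ∫ t in (0:ℝ)..T, (u t) ^ 2 := by
  have hs : Set.uIcc (0:ℝ) T = Set.Icc 0 T := Set.uIcc_of_le hT.le
  -- continuity facts
  have hScont : ContinuousOn S (Set.Icc 0 T) := fun t ht => (hS t ht).continuousWithinAt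
  have hASc : ContinuousOn (fun t => A t *ᵥ S t) (Set.Icc 0 T) := contOn_mulVec hAc hScont
  have hFc : ContinuousOn (fun t => u t • B₁ t + v t • B₂ t) (Set.Icc 0 T) :=
    (huc.smul hB₁c).add (hvc.smul hB₂c)
  have hDc : ContinuousOn (fun t => -(A t *ᵥ S t) + u t • B₁ t + v t • B₂ t) (Set.Icc 0 T) :=
    (hASc.neg.add (huc.smul hB₁c)).add (hvc.smul hB₂c)
  -- integrability helper
  have hint : ∀ {f : ℝ → ℝ}, ContinuousOn f (Set.Icc 0 T) →
      IntervalIntegrable f MeasureTheory.volume 0 T := by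
    intro f hf
    exact ContinuousOn.intervalIntegrable (by rwa [hs])
  have hintv2 : IntervalIntegrable (fun t => (v t) ^ 2) MeasureTheory.volume 0 T :=
    hint (hvc.pow 2)
  have hintu2 : IntervalIntegrable (fun t => (u t) ^ 2) MeasureTheory.volume 0 T :=
    hint (huc.pow 2)
  have hintSS : IntervalIntegrable (fun t => S t ⬝ᵥ S t) MeasureTheory.volume 0 T :=
    hint (contOn_dot hScont hScont)
  have hintFF : IntervalIntegrable
      (fun t => (u t • B₁ t + v t • B₂ t) ⬝ᵥ (u t • B₁ t + v t • B₂ t))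
      MeasureTheory.volume 0 T := hint (contOn_dot hFc hFc)
  have hintSAS : IntervalIntegrable (fun t => S t ⬝ᵥ (A t *ᵥ S t)) MeasureTheory.volume 0 T :=
    hint (contOn_dot hScont hASc)
  have hintSF : IntervalIntegrable (fun t => S t ⬝ᵥ (u t • B₁ t + v t • B₂ t))
      MeasureTheory.volume 0 T := hint (contOn_dot hScont hFc)
  -- derivative of t ↦ S t ⬝ᵥ S t
  have hg : ∀ t ∈ Set.Icc (0:ℝ) T, HasDerivWithinAt (fun t => S t ⬝ᵥ S t)
      (2 * (S t ⬝ᵥ (-(A t *ᵥ S t) + u t • B₁ t + v t • B₂ t))) (Set.Icc 0 T) t := by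
    intro t ht
    have hc0 := hasDerivWithinAt_proj (hS t ht) 0
    have hc1 := hasDerivWithinAt_proj (hS t ht) 1
    have h : HasDerivWithinAt (fun t => S t 0 * S t 0 + S t 1 * S t 1) _ _ _ :=
      ((hc0.mul hc0).add (hc1.mul hc1))
    have heq : (fun t => S t 0 * S t 0 + S t 1 * S t 1) = fun t => S t ⬝ᵥ S t := by
      funext t; simp [dotProduct, Fin.sum_univ_two]
    rw [heq] at h
    convert h using 1
    simp [dotProduct, Fin.sum_univ_two]
    ring
  -- FTC
  have hftc : (∫ t in (0:ℝ)..T,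
      2 * (S t ⬝ᵥ (-(A t *ᵥ S t) + u t • B₁ t + v t • B₂ t)))
      = (S T ⬝ᵥ S T) - (S 0 ⬝ᵥ S 0) := by
    apply integral_eq_sub_of_hasDeriv_right_of_le hT.le (contOn_dot hScont hScont)
    · intro x hx
      exact (hg x (Set.Ioo_subset_Icc_self hx)).mono_of_mem_nhdsWithin
        (Icc_mem_nhdsGT_of_mem ⟨hx.1.le, hx.2⟩)
    · exact hint (continuousOn_const.mul (contOn_dot hScont hDc))
  have hgT : 0 ≤ S T ⬝ᵥ S T := by
    simp only [dotProduct, Fin.sum_univ_two]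
    exact add_nonneg (mul_self_nonneg _) (mul_self_nonneg _)
  have hg0 : (S 0 ⬝ᵥ S 0) = 0 := by rw [hS0]; simp
  -- pointwise: S ⬝ᵥ D = S ⬝ᵥ F - S ⬝ᵥ (A S)
  have hSD : ∀ t, S t ⬝ᵥ (-(A t *ᵥ S t) + u t • B₁ t + v t • B₂ t)
      = S t ⬝ᵥ (u t • B₁ t + v t • B₂ t) - S t ⬝ᵥ (A t *ᵥ S t) := by
    intro t
    rw [show -(A t *ᵥ S t) + u t • B₁ t + v t • B₂ t
        = (u t • B₁ t + v t • B₂ t) - (A t *ᵥ S t) by abel]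
    rw [dotProduct_sub]
  -- ∫ S⬝AS ≤ ∫ S⬝F
  have h1 : (∫ t in (0:ℝ)..T, S t ⬝ᵥ (A t *ᵥ S t))
      ≤ ∫ t in (0:ℝ)..T, S t ⬝ᵥ (u t • B₁ t + v t • B₂ t) := by
    have e1 : (∫ t in (0:ℝ)..T,
        2 * (S t ⬝ᵥ (-(A t *ᵥ S t) + u t • B₁ t + v t • B₂ t)))
        = 2 * ((∫ t in (0:ℝ)..T, S t ⬝ᵥ (u t • B₁ t + v t • B₂ t))
            - ∫ t in (0:ℝ)..T, S t ⬝ᵥ (A t *ᵥ S t)) := by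
      rw [intervalIntegral.integral_const_mul]
      congr 1
      rw [← intervalIntegral.integral_sub hintSF hintSAS]
      exact intervalIntegral.integral_congr fun t _ => hSD t
    have : 0 ≤ (∫ t in (0:ℝ)..T,
        2 * (S t ⬝ᵥ (-(A t *ᵥ S t) + u t • B₁ t + v t • B₂ t))) := by
      rw [hftc, hg0]; linarith
    rw [e1] at this
    linarith
  -- coercivity: ρhat * ∫ S⬝S ≤ ∫ S⬝AS
  have h2 : ρhat * (∫ t in (0:ℝ)..T, S t ⬝ᵥ S t)
      ≤ ∫ t in (0:ℝ)..T, S t ⬝ᵥ (A t *ᵥ S t) := by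
    rw [← intervalIntegral.integral_const_mul]
    exact intervalIntegral.integral_mono_on hT.le (hintSS.const_mul _) hintSAS
      fun t ht => hAcoer t ht (S t)
  -- Young on S⬝F
  have h3 : (∫ t in (0:ℝ)..T, S t ⬝ᵥ (u t • B₁ t + v t • B₂ t))
      ≤ ρhat / 2 * (∫ t in (0:ℝ)..T, S t ⬝ᵥ S t)
        + 1 / (2 * ρhat) * ∫ t in (0:ℝ)..T,
            (u t • B₁ t + v t • B₂ t) ⬝ᵥ (u t • B₁ t + v t • B₂ t) := by
    have := intervalIntegral.integral_mono_on hT.le hintSF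
      ((hintSS.const_mul (ρhat / 2)).add (hintFF.const_mul (1 / (2 * ρhat))))
      (fun t _ => young_dot ρhat hρ (S t) (u t • B₁ t + v t • B₂ t))
    rwa [intervalIntegral.integral_add (hintSS.const_mul _) (hintFF.const_mul _),
      intervalIntegral.integral_const_mul, intervalIntegral.integral_const_mul] at this
  -- hence ρhat² ∫ S⬝S ≤ ∫ F⬝F
  have hIS : ρhat ^ 2 * (∫ t in (0:ℝ)..T, S t ⬝ᵥ S t)
      ≤ ∫ t in (0:ℝ)..T, (u t • B₁ t + v t • B₂ t) ⬝ᵥ (u t • B₁ t + v t • B₂ t) := by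
    have h4 : ρhat / 2 * (∫ t in (0:ℝ)..T, S t ⬝ᵥ S t)
        ≤ 1 / (2 * ρhat) * ∫ t in (0:ℝ)..T,
            (u t • B₁ t + v t • B₂ t) ⬝ᵥ (u t • B₁ t + v t • B₂ t) := by linarith
    have h5 := mul_le_mul_of_nonneg_left h4 (by positivity : (0:ℝ) ≤ 2 * ρhat)
    calc ρhat ^ 2 * (∫ t in (0:ℝ)..T, S t ⬝ᵥ S t)
        = 2 * ρhat * (ρhat / 2 * ∫ t in (0:ℝ)..T, S t ⬝ᵥ S t) := by ring
      _ ≤ 2 * ρhat * (1 / (2 * ρhat) * ∫ t in (0:ℝ)..T,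
            (u t • B₁ t + v t • B₂ t) ⬝ᵥ (u t • B₁ t + v t • B₂ t)) := h5
      _ = ∫ t in (0:ℝ)..T,
            (u t • B₁ t + v t • B₂ t) ⬝ᵥ (u t • B₁ t + v t • B₂ t) := by
          field_simp
  -- pointwise bound on the main integrand
  have hpoint : ∀ t ∈ Set.Icc (0:ℝ) T,
      v t * (Θ ⬝ᵥ (-(A t *ᵥ S t) + u t • B₁ t + v t • B₂ t))
      ≤ (θ₁ + θ₂) / 2 * (v t) ^ 2 + a ^ 2 / (2 * θ₁) * (S t ⬝ᵥ S t)
        + 1 / (2 * θ₂) * ((u t • B₁ t + v t • B₂ t) ⬝ᵥ (u t • B₁ t + v t • B₂ t)) := by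
    intro t ht
    have hΘd : Θ ⬝ᵥ (-(A t *ᵥ S t) + u t • B₁ t + v t • B₂ t)
        = -((A t *ᵥ S t) 0) + (u t • B₁ t + v t • B₂ t) 0 := by
      subst hΘ
      simp [dotProduct, Fin.sum_univ_two, vecHead]
      ring
    rw [hΘd, mul_add]
    have hy1 := young_scalar θ₁ (v t) (-((A t *ᵥ S t) 0)) hθ₁
    rw [neg_sq] at hy1
    have hy2 := young_scalar θ₂ (v t) ((u t • B₁ t + v t • B₂ t) 0) hθ₂
    have h1θ : (0:ℝ) ≤ 1 / (2 * θ₁) := by positivity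
    have h2θ : (0:ℝ) ≤ 1 / (2 * θ₂) := by positivity
    have hA3 : 1 / (2 * θ₁) * ((A t *ᵥ S t) 0) ^ 2
        ≤ a ^ 2 / (2 * θ₁) * (S t ⬝ᵥ S t) := by
      have hch := (comp_sq_le_dot (A t *ᵥ S t) 0).trans (hAbound t ht (S t))
      calc 1 / (2 * θ₁) * ((A t *ᵥ S t) 0) ^ 2
          ≤ 1 / (2 * θ₁) * (a ^ 2 * (S t ⬝ᵥ S t)) := mul_le_mul_of_nonneg_left hch h1θ
        _ = a ^ 2 / (2 * θ₁) * (S t ⬝ᵥ S t) := by ring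
    have hF3 : 1 / (2 * θ₂) * ((u t • B₁ t + v t • B₂ t) 0) ^ 2
        ≤ 1 / (2 * θ₂) * ((u t • B₁ t + v t • B₂ t) ⬝ᵥ (u t • B₁ t + v t • B₂ t)) :=
      mul_le_mul_of_nonneg_left (comp_sq_le_dot _ 0) h2θ
    linarith
  -- integrate the pointwise bound
  have hmain : (∫ t in (0:ℝ)..T,
      v t * (Θ ⬝ᵥ (-(A t *ᵥ S t) + u t • B₁ t + v t • B₂ t)))
      ≤ (θ₁ + θ₂) / 2 * (∫ t in (0:ℝ)..T, (v t) ^ 2)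
        + a ^ 2 / (2 * θ₁) * (∫ t in (0:ℝ)..T, S t ⬝ᵥ S t)
        + 1 / (2 * θ₂) * ∫ t in (0:ℝ)..T,
            (u t • B₁ t + v t • B₂ t) ⬝ᵥ (u t • B₁ t + v t • B₂ t) := by
    have hcontmain : ContinuousOn
        (fun t => v t * (Θ ⬝ᵥ (-(A t *ᵥ S t) + u t • B₁ t + v t • B₂ t)))
        (Set.Icc 0 T) := hvc.mul (contOn_dot continuousOn_const hDc)
    have := intervalIntegral.integral_mono_on hT.le (hint hcontmain)
      (((hintv2.const_mul ((θ₁ + θ₂) / 2)).add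
        (hintSS.const_mul (a ^ 2 / (2 * θ₁)))).add
        (hintFF.const_mul (1 / (2 * θ₂)))) hpoint
    rwa [intervalIntegral.integral_add ((hintv2.const_mul _).add (hintSS.const_mul _))
        (hintFF.const_mul _),
      intervalIntegral.integral_add (hintv2.const_mul _) (hintSS.const_mul _),
      intervalIntegral.integral_const_mul, intervalIntegral.integral_const_mul,
      intervalIntegral.integral_const_mul] at this
  -- bound on ∫ F⬝F
  have hIF : (∫ t in (0:ℝ)..T,
      (u t • B₁ t + v t • B₂ t) ⬝ᵥ (u t • B₁ t + v t • B₂ t))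
      ≤ (1 + θ₃) * b₁ ^ 2 * (∫ t in (0:ℝ)..T, (u t) ^ 2)
        + (1 + 1 / θ₃) * b₂ ^ 2 * ∫ t in (0:ℝ)..T, (v t) ^ 2 := by
    have hpt : ∀ t ∈ Set.Icc (0:ℝ) T,
        (u t • B₁ t + v t • B₂ t) ⬝ᵥ (u t • B₁ t + v t • B₂ t)
        ≤ (1 + θ₃) * b₁ ^ 2 * (u t) ^ 2 + (1 + 1 / θ₃) * b₂ ^ 2 * (v t) ^ 2 := by
      intro t ht
      have h0 := sum_sq_dot θ₃ hθ₃ (u t • B₁ t) (v t • B₂ t)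
      have e1 : (u t • B₁ t) ⬝ᵥ (u t • B₁ t) = (u t) ^ 2 * (B₁ t ⬝ᵥ B₁ t) := by
        rw [smul_dotProduct, dotProduct_smul]
        simp [smul_smul]; ring
      have e2 : (v t • B₂ t) ⬝ᵥ (v t • B₂ t) = (v t) ^ 2 * (B₂ t ⬝ᵥ B₂ t) := by
        rw [smul_dotProduct, dotProduct_smul]
        simp [smul_smul]; ring
      have hu2 : (u t) ^ 2 * (B₁ t ⬝ᵥ B₁ t) ≤ (u t) ^ 2 * b₁ ^ 2 :=
        mul_le_mul_of_nonneg_left (hB₁bound t ht) (sq_nonneg _)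
      have hv2 : (v t) ^ 2 * (B₂ t ⬝ᵥ B₂ t) ≤ (v t) ^ 2 * b₂ ^ 2 :=
        mul_le_mul_of_nonneg_left (hB₂bound t ht) (sq_nonneg _)
      have hθ₃1 : (0:ℝ) ≤ 1 + θ₃ := by linarith
      have hθ₃2 : (0:ℝ) ≤ 1 + 1 / θ₃ := by positivity
      rw [e1, e2] at h0
      nlinarith [mul_le_mul_of_nonneg_left hu2 hθ₃1, mul_le_mul_of_nonneg_left hv2 hθ₃2]
    have := intervalIntegral.integral_mono_on hT.le hintFF
      ((hintu2.const_mul ((1 + θ₃) * b₁ ^ 2)).add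
        (hintv2.const_mul ((1 + 1 / θ₃) * b₂ ^ 2))) hpt
    rwa [intervalIntegral.integral_add (hintu2.const_mul _) (hintv2.const_mul _),
      intervalIntegral.integral_const_mul, intervalIntegral.integral_const_mul] at this
  -- combine everything
  have hc0 : 0 ≤ c := by rw [hc]; positivity
  have hcoef : (0:ℝ) ≤ a ^ 2 / (2 * θ₁) := by positivity
  -- a²/(2θ₁) * IS ≤ a²/(2θ₁ρhat²) * IF
  have hstep : a ^ 2 / (2 * θ₁) * (∫ t in (0:ℝ)..T, S t ⬝ᵥ S t)
      ≤ a ^ 2 / (2 * θ₁ * ρhat ^ 2) * ∫ t in (0:ℝ)..T,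
          (u t • B₁ t + v t • B₂ t) ⬝ᵥ (u t • B₁ t + v t • B₂ t) := by
    have := mul_le_mul_of_nonneg_left hIS
      (by positivity : (0:ℝ) ≤ a ^ 2 / (2 * θ₁ * ρhat ^ 2))
    calc a ^ 2 / (2 * θ₁) * (∫ t in (0:ℝ)..T, S t ⬝ᵥ S t)
        = a ^ 2 / (2 * θ₁ * ρhat ^ 2)
            * (ρhat ^ 2 * ∫ t in (0:ℝ)..T, S t ⬝ᵥ S t) := by
          field_simp
      _ ≤ a ^ 2 / (2 * θ₁ * ρhat ^ 2) * ∫ t in (0:ℝ)..T,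
            (u t • B₁ t + v t • B₂ t) ⬝ᵥ (u t • B₁ t + v t • B₂ t) := this
  have hcIF := mul_le_mul_of_nonneg_left hIF hc0
  have hceq : a ^ 2 / (2 * θ₁ * ρhat ^ 2) * (∫ t in (0:ℝ)..T,
        (u t • B₁ t + v t • B₂ t) ⬝ᵥ (u t • B₁ t + v t • B₂ t))
      + 1 / (2 * θ₂) * (∫ t in (0:ℝ)..T,
        (u t • B₁ t + v t • B₂ t) ⬝ᵥ (u t • B₁ t + v t • B₂ t))
      = c * ∫ t in (0:ℝ)..T,
        (u t • B₁ t + v t • B₂ t) ⬝ᵥ (u t • B₁ t + v t • B₂ t) := by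
    rw [hc]; ring
  nlinarith [hmain, hstep, hcIF, hceq]
end

section
/- Consider the deterministic single-player liquidation model: T > 0, x ∈ ℝ, Θ := (1,0) ∈ ℝ²; continuous coefficients η, λ : [0,T] → ℝ with η > 0 and λ ≥ 0, A : [0,T] → M₂(ℝ), B⁽¹⁾, B⁽²⁾ : [0,T] → ℝ², R : [0,T] → ℝ². For continuous ξ : [0,T] → ℝ set X^ξ(t) := x − ∫₀ᵗ ξ(s) ds and let S^ξ be the solution of (S^ξ)′ = −A S^ξ + B⁽¹⁾ ξ + B⁽²⁾ X^ξ + R with S^ξ(0) = 0, with cost J(ξ) := ∫₀ᵀ [η ξ² + ξ ⟨Θ, S^ξ⟩ + λ (X^ξ)²] dt; call ξ admissible if X^ξ(T) = 0. Suppose M : [0,T] → ℝ and 𝒫 : [0,T] → ℝ² are differentiable such that ξ* := (M − ⟨B⁽¹⁾, 𝒫⟩)/(2η) is admissible, 𝒫(T) = 0, −M′ = 2λ X* + ⟨B⁽²⁾, 𝒫⟩ + ⟨Θ, −A S* + B⁽¹⁾ ξ* + B⁽²⁾ X* + R⟩ and −𝒫′ = −Aᵀ 𝒫 + Θ ξ*,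 where X* := X^{ξ*} and S* := S^{ξ*}. Then for every admissible ξ: J(ξ) − J(ξ*) = ∫₀ᵀ [η (ξ − ξ*)² + λ (X^ξ − X*)² + (X^ξ − X*) ⟨Θ, −A (S^ξ − S*) + B⁽¹⁾ (ξ − ξ*) + B⁽²⁾ (X^ξ − X*)⟩] dt. -/
open Matrix Set intervalIntegral
open MeasureTheory

lemma aux_hasDerivWithinAt_X (T x : ℝ) (ξ X : ℝ → ℝ)
    (hξc : ContinuousOn ξ (Set.Icc 0 T))
    (hX : ∀ t, X t = x - ∫ s in (0:ℝ)..t, ξ s) {t : ℝ} (ht : t ∈ Set.Icc 0 T) :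
    HasDerivWithinAt X (-(ξ t)) (Set.Icc 0 T) t := by
  haveI : Fact (t ∈ Set.Icc (0:ℝ) T) := ⟨ht⟩
  have hint : IntervalIntegrable ξ volume 0 t := by
    apply (hξc.mono _).intervalIntegrable
    rw [Set.uIcc_of_le ht.1]
    exact Set.Icc_subset_Icc le_rfl ht.2
  have h : HasDerivWithinAt (fun u => ∫ s in (0:ℝ)..u, ξ s) (ξ t) (Set.Icc 0 T) t :=
    intervalIntegral.integral_hasDerivWithinAt_right hint
      (hξc.stronglyMeasurableAtFilter_nhdsWithin measurableSet_Icc t)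
      (hξc.continuousWithinAt ht)
  have hXeq : X = fun u => x - ∫ s in (0:ℝ)..u, ξ s := funext hX
  rw [hXeq]
  exact ((hasDerivWithinAt_const t (Set.Icc 0 T) x).sub h).congr_deriv (zero_sub _)

lemma aux_dot_contOn {T : ℝ} (V W : ℝ → Fin 2 → ℝ)
    (hV : ContinuousOn V (Set.Icc 0 T)) (hW : ContinuousOn W (Set.Icc 0 T)) :
    ContinuousOn (fun t => V t ⬝ᵥ W t) (Set.Icc 0 T) := by
  simp only [dotProduct, Fin.sum_univ_two]
  exact (((continuous_apply 0).comp_continuousOn hV).mul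
      ((continuous_apply 0).comp_continuousOn hW)).add
    (((continuous_apply 1).comp_continuousOn hV).mul
      ((continuous_apply 1).comp_continuousOn hW))

/-- Cost decomposition for the deterministic single-player liquidation model:
for every admissible strategy `ξ`, the cost difference `J(ξ) − J(ξ*)` equals
the cost of the round trip `ξ − ξ*`, where `ξ*` is the candidate strategy from
the forward–backward system. -/
theorem liquidation_cost_decomposition
    (T x : ℝ) (hT : 0 < T)
    (Θ : Fin 2 → ℝ) (hΘ : Θ = ![1, 0])
    (η lam : ℝ → ℝ) (A : ℝ → Matrix (Fin 2) (Fin 2) ℝ)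
    (B₁ B₂ R : ℝ → (Fin 2 → ℝ))
    (hηc : ContinuousOn η (Set.Icc 0 T)) (hlamc : ContinuousOn lam (Set.Icc 0 T))
    (hAc : ContinuousOn A (Set.Icc 0 T))
    (hB₁c : ContinuousOn B₁ (Set.Icc 0 T)) (hB₂c : ContinuousOn B₂ (Set.Icc 0 T))
    (hRc : ContinuousOn R (Set.Icc 0 T))
    (hηpos : ∀ t ∈ Set.Icc (0 : ℝ) T, 0 < η t)
    (hlamnonneg : ∀ t ∈ Set.Icc (0 : ℝ) T, 0 ≤ lam t)
    -- the candidate strategy and its adjoint system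
    (M : ℝ → ℝ) (Padj : ℝ → (Fin 2 → ℝ)) (ξstar : ℝ → ℝ)
    (hξstar : ∀ t, ξstar t = (M t - B₁ t ⬝ᵥ Padj t) / (2 * η t))
    (Xstar : ℝ → ℝ) (Sstar : ℝ → (Fin 2 → ℝ))
    (hXstar : ∀ t, Xstar t = x - ∫ s in (0:ℝ)..t, ξstar s)
    (hSstar0 : Sstar 0 = 0)
    (hSstar : ∀ t ∈ Set.Icc (0 : ℝ) T,
      HasDerivWithinAt Sstar
        (-(A t *ᵥ Sstar t) + ξstar t • B₁ t + Xstar t • B₂ t + R t)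
        (Set.Icc (0 : ℝ) T) t)
    (hadmstar : Xstar T = 0)
    (hPadjT : Padj T = 0)
    (hM : ∀ t ∈ Set.Icc (0 : ℝ) T,
      HasDerivWithinAt M
        (-(2 * lam t * Xstar t + B₂ t ⬝ᵥ Padj t
          + Θ ⬝ᵥ (-(A t *ᵥ Sstar t) + ξstar t • B₁ t + Xstar t • B₂ t + R t)))
        (Set.Icc (0 : ℝ) T) t)
    (hPadj : ∀ t ∈ Set.Icc (0 : ℝ) T,
      HasDerivWithinAt Padj (-(-((A t)ᵀ *ᵥ Padj t) + ξstar t • Θ))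
        (Set.Icc (0 : ℝ) T) t) :
    -- conclusion: cost decomposition for every admissible ξ
    ∀ (ξ Xξ : ℝ → ℝ) (Sξ : ℝ → (Fin 2 → ℝ)),
      ContinuousOn ξ (Set.Icc 0 T) →
      (∀ t, Xξ t = x - ∫ s in (0:ℝ)..t, ξ s) →
      Sξ 0 = 0 →
      (∀ t ∈ Set.Icc (0 : ℝ) T,
        HasDerivWithinAt Sξ
          (-(A t *ᵥ Sξ t) + ξ t • B₁ t + Xξ t • B₂ t + R t)
          (Set.Icc (0 : ℝ) T) t) →
      Xξ T = 0 →
      (∫ t in (0:ℝ)..T,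
          (η t * (ξ t) ^ 2 + ξ t * (Θ ⬝ᵥ Sξ t) + lam t * (Xξ t) ^ 2))
        - (∫ t in (0:ℝ)..T,
            (η t * (ξstar t) ^ 2 + ξstar t * (Θ ⬝ᵥ Sstar t)
              + lam t * (Xstar t) ^ 2))
        = ∫ t in (0:ℝ)..T,
            (η t * (ξ t - ξstar t) ^ 2 + lam t * (Xξ t - Xstar t) ^ 2
              + (Xξ t - Xstar t)
                * (Θ ⬝ᵥ (-(A t *ᵥ (Sξ t - Sstar t))
                    + (ξ t - ξstar t) • B₁ t + (Xξ t - Xstar t) • B₂ t))) := by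
  intro ξ Xξ Sξ hξcon hXξ hSξ0 hSξd hadm
  -- continuity of the basic objects
  have hMc : ContinuousOn M (Set.Icc 0 T) := fun t ht => (hM t ht).continuousWithinAt
  have hPc : ContinuousOn Padj (Set.Icc 0 T) := fun t ht => (hPadj t ht).continuousWithinAt
  have hSξc : ContinuousOn Sξ (Set.Icc 0 T) := fun t ht => (hSξd t ht).continuousWithinAt
  have hSsc : ContinuousOn Sstar (Set.Icc 0 T) := fun t ht => (hSstar t ht).continuousWithinAt
  have hξscc : ContinuousOn ξstar (Set.Icc 0 T) := by
    have he : ξstar = fun t => (M t - B₁ t ⬝ᵥ Padj t) / (2 * η t) := funext hξstar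
    rw [he]
    exact (hMc.sub (aux_dot_contOn B₁ Padj hB₁c hPc)).div (continuousOn_const.mul hηc)
      (fun t ht => by have := hηpos t ht; positivity)
  have hXξcc : ContinuousOn Xξ (Set.Icc 0 T) :=
    fun t ht => (aux_hasDerivWithinAt_X T x ξ Xξ hξcon hXξ ht).continuousWithinAt
  have hXscc : ContinuousOn Xstar (Set.Icc 0 T) :=
    fun t ht => (aux_hasDerivWithinAt_X T x ξstar Xstar hξscc hXstar ht).continuousWithinAt
  -- component continuity
  have capp : ∀ (G : ℝ → Fin 2 → ℝ), ContinuousOn G (Set.Icc 0 T) →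
      ∀ i, ContinuousOn (fun t => G t i) (Set.Icc 0 T) :=
    fun G hG i => (continuous_apply i).comp_continuousOn hG
  -- the potential function F
  set F : ℝ → ℝ := fun u =>
    -(M u * (Xξ u - Xstar u))
    - (Xξ u - Xstar u) * (Θ 0 * Sstar u 0 + Θ 1 * Sstar u 1)
    - (Padj u 0 * (Sξ u 0 - Sstar u 0) + Padj u 1 * (Sξ u 1 - Sstar u 1))
    - (Xξ u - Xstar u) * (Θ 0 * (Sξ u 0 - Sstar u 0) + Θ 1 * (Sξ u 1 - Sstar u 1))
    with hFdef
  have hX0 : Xξ 0 = x := by rw [hXξ 0, intervalIntegral.integral_same, sub_zero]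
  have hXs0 : Xstar 0 = x := by rw [hXstar 0, intervalIntegral.integral_same, sub_zero]
  have hF0 : F 0 = 0 := by
    simp [hFdef, hX0, hXs0, hSξ0, hSstar0]
  have hFT : F T = 0 := by
    simp [hFdef, hadm, hadmstar, hPadjT]
  -- derivative of F on Icc
  have hFd : ∀ t ∈ Set.Icc (0:ℝ) T, HasDerivWithinAt F
      ((η t * (ξ t) ^ 2 + ξ t * (Θ ⬝ᵥ Sξ t) + lam t * (Xξ t) ^ 2)
        - (η t * (ξstar t) ^ 2 + ξstar t * (Θ ⬝ᵥ Sstar t) + lam t * (Xstar t) ^ 2)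
        - (η t * (ξ t - ξstar t) ^ 2 + lam t * (Xξ t - Xstar t) ^ 2
            + (Xξ t - Xstar t)
              * (Θ ⬝ᵥ (-(A t *ᵥ (Sξ t - Sstar t))
                  + (ξ t - ξstar t) • B₁ t + (Xξ t - Xstar t) • B₂ t))))
      (Set.Icc (0:ℝ) T) t := by
    intro t ht
    have hη := hηpos t ht
    have hMt : M t = 2 * η t * ξstar t + (B₁ t 0 * Padj t 0 + B₁ t 1 * Padj t 1) := by
      have h0 := hξstar t
      simp only [dotProduct, Fin.sum_univ_two] at h0
      field_simp at h0
      linarith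
    have hXd := aux_hasDerivWithinAt_X T x ξ Xξ hξcon hXξ ht
    have hXsd := aux_hasDerivWithinAt_X T x ξstar Xstar hξscc hXstar ht
    have hdX := hXd.sub hXsd
    have hSi := hasDerivWithinAt_pi.1 (hSξd t ht)
    have hSsi := hasDerivWithinAt_pi.1 (hSstar t ht)
    have hPi := hasDerivWithinAt_pi.1 (hPadj t ht)
    have hdS0 := (hSi 0).sub (hSsi 0)
    have hdS1 := (hSi 1).sub (hSsi 1)
    have h1 := ((hM t ht).mul hdX).neg
    have h2 := hdX.mul (((hSsi 0).const_mul (Θ 0)).add ((hSsi 1).const_mul (Θ 1)))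
    have h3 := ((hPi 0).mul hdS0).add ((hPi 1).mul hdS1)
    have h4 := hdX.mul ((hdS0.const_mul (Θ 0)).add (hdS1.const_mul (Θ 1)))
    have hE := ((h1.sub h2).sub h3).sub h4
    refine hE.congr_deriv ?_
    simp only [dotProduct, Matrix.mulVec, Matrix.transpose_apply, Fin.sum_univ_two,
      Pi.add_apply, Pi.neg_apply, Pi.sub_apply, Pi.smul_apply, smul_eq_mul]
    linear_combination (ξ t - ξstar t) * hMt
  -- continuity of the three integrands
  have hfc : ContinuousOn
      (fun t => η t * (ξ t) ^ 2 + ξ t * (Θ ⬝ᵥ Sξ t) + lam t * (Xξ t) ^ 2) (Set.Icc 0 T) := by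
    simp only [dotProduct, Fin.sum_univ_two]
    exact ((hηc.mul (hξcon.pow 2)).add (hξcon.mul
        ((continuousOn_const.mul (capp _ hSξc 0)).add (continuousOn_const.mul (capp _ hSξc 1))))).add
      (hlamc.mul (hXξcc.pow 2))
  have hgc : ContinuousOn
      (fun t => η t * (ξstar t) ^ 2 + ξstar t * (Θ ⬝ᵥ Sstar t) + lam t * (Xstar t) ^ 2)
      (Set.Icc 0 T) := by
    simp only [dotProduct, Fin.sum_univ_two]
    exact ((hηc.mul (hξscc.pow 2)).add (hξscc.mul
        ((continuousOn_const.mul (capp _ hSsc 0)).add (continuousOn_const.mul (capp _ hSsc 1))))).add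
      (hlamc.mul (hXscc.pow 2))
  have hAij : ∀ i j, ContinuousOn (fun t => A t i j) (Set.Icc 0 T) :=
    fun i j => (continuous_apply j).comp_continuousOn ((continuous_apply i).comp_continuousOn hAc)
  have hhc : ContinuousOn
      (fun t => η t * (ξ t - ξstar t) ^ 2 + lam t * (Xξ t - Xstar t) ^ 2
        + (Xξ t - Xstar t)
          * (Θ ⬝ᵥ (-(A t *ᵥ (Sξ t - Sstar t))
              + (ξ t - ξstar t) • B₁ t + (Xξ t - Xstar t) • B₂ t))) (Set.Icc 0 T) := by
    simp only [dotProduct, Matrix.mulVec, Fin.sum_univ_two, Pi.add_apply, Pi.neg_apply,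
      Pi.sub_apply, Pi.smul_apply, smul_eq_mul]
    have hdS : ∀ i, ContinuousOn (fun t => Sξ t i - Sstar t i) (Set.Icc 0 T) :=
      fun i => (capp _ hSξc i).sub (capp _ hSsc i)
    have hdξ : ContinuousOn (fun t => ξ t - ξstar t) (Set.Icc 0 T) := hξcon.sub hξscc
    have hdXc : ContinuousOn (fun t => Xξ t - Xstar t) (Set.Icc 0 T) := hXξcc.sub hXscc
    refine ((hηc.mul (hdξ.pow 2)).add (hlamc.mul (hdXc.pow 2))).add (hdXc.mul ?_)
    refine (continuousOn_const.mul ?_).add (continuousOn_const.mul ?_) <;>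
      exact ((((hAij _ 0).mul (hdS 0)).add ((hAij _ 1).mul (hdS 1))).neg.add
          (hdξ.mul (capp _ hB₁c _))).add (hdXc.mul (capp _ hB₂c _))
  have huIcc : Set.uIcc (0:ℝ) T = Set.Icc 0 T := Set.uIcc_of_le hT.le
  have hfInt : IntervalIntegrable
      (fun t => η t * (ξ t) ^ 2 + ξ t * (Θ ⬝ᵥ Sξ t) + lam t * (Xξ t) ^ 2) volume 0 T :=
    (huIcc ▸ hfc).intervalIntegrable
  have hgInt : IntervalIntegrable
      (fun t => η t * (ξstar t) ^ 2 + ξstar t * (Θ ⬝ᵥ Sstar t) + lam t * (Xstar t) ^ 2)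
      volume 0 T := (huIcc ▸ hgc).intervalIntegrable
  have hhInt : IntervalIntegrable
      (fun t => η t * (ξ t - ξstar t) ^ 2 + lam t * (Xξ t - Xstar t) ^ 2
        + (Xξ t - Xstar t)
          * (Θ ⬝ᵥ (-(A t *ᵥ (Sξ t - Sstar t))
              + (ξ t - ξstar t) • B₁ t + (Xξ t - Xstar t) • B₂ t))) volume 0 T :=
    (huIcc ▸ hhc).intervalIntegrable
  have e1 : (∫ u in (0:ℝ)..T,
      ((η u * (ξ u) ^ 2 + ξ u * (Θ ⬝ᵥ Sξ u) + lam u * (Xξ u) ^ 2)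
        - (η u * (ξstar u) ^ 2 + ξstar u * (Θ ⬝ᵥ Sstar u) + lam u * (Xstar u) ^ 2)
        - (η u * (ξ u - ξstar u) ^ 2 + lam u * (Xξ u - Xstar u) ^ 2
            + (Xξ u - Xstar u)
              * (Θ ⬝ᵥ (-(A u *ᵥ (Sξ u - Sstar u))
                  + (ξ u - ξstar u) • B₁ u + (Xξ u - Xstar u) • B₂ u))))) = F T - F 0 := by
    refine intervalIntegral.integral_eq_sub_of_hasDeriv_right_of_le hT.le
      (fun t ht => (hFd t ht).continuousWithinAt) ?_ ((hfInt.sub hgInt).sub hhInt)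
    intro u hu
    exact (hFd u (Set.Ioo_subset_Icc_self hu)).mono_of_mem_nhdsWithin
      (Icc_mem_nhdsGT_of_mem ⟨hu.1.le, hu.2⟩)
  rw [hFT, hF0, sub_zero] at e1
  rw [intervalIntegral.integral_sub (hfInt.sub hgInt) hhInt,
    intervalIntegral.integral_sub hfInt hgInt] at e1
  linarith
end

section
/- Consider the deterministic single-player liquidation model: T > 0, x ∈ ℝ, Θ := (1,0) ∈ ℝ²; continuous coefficients η, λ : [0,T] → ℝ with η > 0 and λ ≥ 0, A : [0,T] → M₂(ℝ), B⁽¹⁾, B⁽²⁾ : [0,T] → ℝ², R : [0,T] → ℝ². For continuous ξ : [0,T] → ℝ set X^ξ(t) := x − ∫₀ᵗ ξ(s) ds and let S^ξ be the solution of (S^ξ)′ = −A S^ξ + B⁽¹⁾ ξ + B⁽²⁾ X^ξ + R with S^ξ(0) = 0, with cost J(ξ) := ∫₀ᵀ [η ξ² + ξ ⟨Θ, S^ξ⟩ + λ (X^ξ)²] dt; call ξ admissible if X^ξ(T) = 0. Suppose M : [0,T] → ℝ and 𝒫 : [0,T] → ℝ² are differentiable such that ξ* := (M − ⟨B⁽¹⁾,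 𝒫⟩)/(2η) is admissible, 𝒫(T) = 0, −M′ = 2λ X* + ⟨B⁽²⁾, 𝒫⟩ + ⟨Θ, −A S* + B⁽¹⁾ ξ* + B⁽²⁾ X* + R⟩ and −𝒫′ = −Aᵀ 𝒫 + Θ ξ*, where X* := X^{ξ*} and S* := S^{ξ*}. Assume moreover there are constants a, b₁, b₂ ≥ 0, ρ̂, θ₁, θ₂, θ₃ > 0, η_min > 0, λ_min ≥ 0 such that for all t ∈ [0,T] and y ∈ ℝ²: ‖A(t) y‖ ≤ a ‖y‖, ⟨y, A(t) y⟩ ≥ ρ̂ ‖y‖², ‖B⁽¹⁾(t)‖ ≤ b₁, ‖B⁽²⁾(t)‖ ≤ b₂, η(t) ≥ η_min, λ(t) ≥ λ_min, and, with c := a²/(2θ₁ρ̂²) + 1/(2θ₂), both λ_min − (θ₁+θ₂)/2 − b₂² (1 + 1/θ₃) c ≥ 0 and η_min − (1+θ₃) b₁² c ≥ 0. Then J(ξ) ≥ J(ξ*) for every admissible ξ; that is, ξ* is optimal. -/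
open Matrix Set intervalIntegral MeasureTheory Topology

lemma hasDerivAt_dot {n : ℕ} {f g : ℝ → Fin n → ℝ} {f' g' : Fin n → ℝ} {t : ℝ}
    (hf : HasDerivAt f f' t) (hg : HasDerivAt g g' t) :
    HasDerivAt (fun τ => f τ ⬝ᵥ g τ) (f' ⬝ᵥ g t + f t ⬝ᵥ g') t := by
  simp only [dotProduct]
  have := HasDerivAt.fun_sum (u := Finset.univ) (fun i (_ : i ∈ Finset.univ) =>
    ((hasDerivAt_pi.1 hf i).fun_mul (hasDerivAt_pi.1 hg i)))
  simpa [Finset.sum_add_distrib] using this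

lemma continuousOn_dot {n : ℕ} {f g : ℝ → Fin n → ℝ} {s : Set ℝ}
    (hf : ContinuousOn f s) (hg : ContinuousOn g s) :
    ContinuousOn (fun τ => f τ ⬝ᵥ g τ) s := by
  simp only [dotProduct]
  exact continuousOn_finset_sum _ fun i _ =>
    ((continuous_apply i).comp_continuousOn hf).mul ((continuous_apply i).comp_continuousOn hg)

lemma continuousOn_mulVec' {s : Set ℝ} {A : ℝ → Matrix (Fin 2) (Fin 2) ℝ} {v : ℝ → Fin 2 → ℝ}
    (hA : ContinuousOn A s) (hv : ContinuousOn v s) :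
    ContinuousOn (fun t => A t *ᵥ v t) s := by
  have hAij : ∀ i j, ContinuousOn (fun t => A t i j) s := fun i j =>
    (continuous_apply j).comp_continuousOn ((continuous_apply i).comp_continuousOn hA)
  have hvj : ∀ j, ContinuousOn (fun t => v t j) s := fun j =>
    (continuous_apply j).comp_continuousOn hv
  apply continuousOn_pi.2
  intro i
  have : (fun t => (A t *ᵥ v t) i) = fun t => A t i 0 * v t 0 + A t i 1 * v t 1 := by
    funext t; simp [Matrix.mulVec, dotProduct, Fin.sum_univ_two]
  rw [this]
  exact ((hAij i 0).mul (hvj 0)).add ((hAij i 1).mul (hvj 1))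

lemma ftc2 {T : ℝ} (hT : 0 ≤ T) {f f' : ℝ → ℝ}
    (hcont : ContinuousOn f (Icc 0 T))
    (hderiv : ∀ t ∈ Ioo (0:ℝ) T, HasDerivAt f (f' t) t)
    (hint : IntervalIntegrable f' volume 0 T) :
    ∫ t in (0:ℝ)..T, f' t = f T - f 0 :=
  integral_eq_sub_of_hasDeriv_right_of_le hT hcont
    (fun t ht => (hderiv t ht).hasDerivWithinAt) hint

lemma primderiv {T : ℝ} {h : ℝ → ℝ} (hc : ContinuousOn h (Icc 0 T))
    {t : ℝ} (ht : t ∈ Ioo (0:ℝ) T) :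
    HasDerivAt (fun u => ∫ s in (0:ℝ)..u, h s) (h t) t := by
  have hmem : Icc (0:ℝ) T ∈ 𝓝 t := Icc_mem_nhds ht.1 ht.2
  have hint : IntervalIntegrable h volume 0 t := by
    apply ContinuousOn.intervalIntegrable
    rw [uIcc_of_le ht.1.le]
    exact hc.mono (Icc_subset_Icc le_rfl ht.2.le)
  have hmeas : StronglyMeasurableAtFilter h (𝓝 t) volume :=
    AEStronglyMeasurable.stronglyMeasurableAtFilter_of_mem
      (hc.aestronglyMeasurable measurableSet_Icc) hmem
  exact intervalIntegral.integral_hasDerivAt_right hint hmeas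
    ((hc t (Ioo_subset_Icc_self ht)).continuousAt hmem)

set_option maxHeartbeats 1600000 in
/-- Verification theorem for the deterministic single-player liquidation model
(sufficient maximum principle without convexity): under the weak-interaction
conditions on the impact coefficients, the candidate strategy `ξ*` obtained
from the forward–backward system is optimal among all admissible strategies. -/
theorem liquidation_verification_optimality
    (T x : ℝ) (hT : 0 < T)
    (Θ : Fin 2 → ℝ) (hΘ : Θ = ![1, 0])
    (η lam : ℝ → ℝ) (A : ℝ → Matrix (Fin 2) (Fin 2) ℝ)
    (B₁ B₂ R : ℝ → (Fin 2 → ℝ))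
    (hηc : ContinuousOn η (Set.Icc 0 T)) (hlamc : ContinuousOn lam (Set.Icc 0 T))
    (hAc : ContinuousOn A (Set.Icc 0 T))
    (hB₁c : ContinuousOn B₁ (Set.Icc 0 T)) (hB₂c : ContinuousOn B₂ (Set.Icc 0 T))
    (hRc : ContinuousOn R (Set.Icc 0 T))
    (hηpos : ∀ t ∈ Set.Icc (0 : ℝ) T, 0 < η t)
    (hlamnonneg : ∀ t ∈ Set.Icc (0 : ℝ) T, 0 ≤ lam t)
    -- the candidate strategy and its adjoint system
    (M : ℝ → ℝ) (Padj : ℝ → (Fin 2 → ℝ)) (ξstar : ℝ → ℝ)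
    (hξstar : ∀ t, ξstar t = (M t - B₁ t ⬝ᵥ Padj t) / (2 * η t))
    (Xstar : ℝ → ℝ) (Sstar : ℝ → (Fin 2 → ℝ))
    (hXstar : ∀ t, Xstar t = x - ∫ s in (0:ℝ)..t, ξstar s)
    (hSstar0 : Sstar 0 = 0)
    (hSstar : ∀ t ∈ Set.Icc (0 : ℝ) T,
      HasDerivWithinAt Sstar
        (-(A t *ᵥ Sstar t) + ξstar t • B₁ t + Xstar t • B₂ t + R t)
        (Set.Icc (0 : ℝ) T) t)
    (hadmstar : Xstar T = 0)
    (hPadjT : Padj T = 0)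
    (hM : ∀ t ∈ Set.Icc (0 : ℝ) T,
      HasDerivWithinAt M
        (-(2 * lam t * Xstar t + B₂ t ⬝ᵥ Padj t
          + Θ ⬝ᵥ (-(A t *ᵥ Sstar t) + ξstar t • B₁ t + Xstar t • B₂ t + R t)))
        (Set.Icc (0 : ℝ) T) t)
    (hPadj : ∀ t ∈ Set.Icc (0 : ℝ) T,
      HasDerivWithinAt Padj (-(-((A t)ᵀ *ᵥ Padj t) + ξstar t • Θ))
        (Set.Icc (0 : ℝ) T) t)
    -- weak-interaction constants and bounds
    (a b₁ b₂ ρhat θ₁ θ₂ θ₃ ηmin lammin c : ℝ)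
    (ha : 0 ≤ a) (hb₁ : 0 ≤ b₁) (hb₂ : 0 ≤ b₂)
    (hρ : 0 < ρhat) (hθ₁ : 0 < θ₁) (hθ₂ : 0 < θ₂) (hθ₃ : 0 < θ₃)
    (hηmin : 0 < ηmin) (hlammin : 0 ≤ lammin)
    (hAbound : ∀ t ∈ Set.Icc (0 : ℝ) T, ∀ y : Fin 2 → ℝ,
      (A t *ᵥ y) ⬝ᵥ (A t *ᵥ y) ≤ a ^ 2 * (y ⬝ᵥ y))
    (hAcoer : ∀ t ∈ Set.Icc (0 : ℝ) T, ∀ y : Fin 2 → ℝ,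
      ρhat * (y ⬝ᵥ y) ≤ y ⬝ᵥ (A t *ᵥ y))
    (hB₁bound : ∀ t ∈ Set.Icc (0 : ℝ) T, B₁ t ⬝ᵥ B₁ t ≤ b₁ ^ 2)
    (hB₂bound : ∀ t ∈ Set.Icc (0 : ℝ) T, B₂ t ⬝ᵥ B₂ t ≤ b₂ ^ 2)
    (hηlb : ∀ t ∈ Set.Icc (0 : ℝ) T, ηmin ≤ η t)
    (hlamlb : ∀ t ∈ Set.Icc (0 : ℝ) T, lammin ≤ lam t)
    (hc : c = a ^ 2 / (2 * θ₁ * ρhat ^ 2) + 1 / (2 * θ₂))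
    (hcond1 : 0 ≤ lammin - (θ₁ + θ₂) / 2 - b₂ ^ 2 * (1 + 1 / θ₃) * c)
    (hcond2 : 0 ≤ ηmin - (1 + θ₃) * b₁ ^ 2 * c) :
    -- conclusion: optimality of ξ* among admissible strategies
    ∀ (ξ Xξ : ℝ → ℝ) (Sξ : ℝ → (Fin 2 → ℝ)),
      ContinuousOn ξ (Set.Icc 0 T) →
      (∀ t, Xξ t = x - ∫ s in (0:ℝ)..t, ξ s) →
      Sξ 0 = 0 →
      (∀ t ∈ Set.Icc (0 : ℝ) T,
        HasDerivWithinAt Sξ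
          (-(A t *ᵥ Sξ t) + ξ t • B₁ t + Xξ t • B₂ t + R t)
          (Set.Icc (0 : ℝ) T) t) →
      Xξ T = 0 →
      (∫ t in (0:ℝ)..T,
          (η t * (ξstar t) ^ 2 + ξstar t * (Θ ⬝ᵥ Sstar t)
            + lam t * (Xstar t) ^ 2))
        ≤ ∫ t in (0:ℝ)..T,
            (η t * (ξ t) ^ 2 + ξ t * (Θ ⬝ᵥ Sξ t) + lam t * (Xξ t) ^ 2) := by
  intro ξ Xξ Sξ hξc hXξ hSξ0 hSξd hadm
  have h0T : (0:ℝ) ≤ T := hT.le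
  have hmem0 : (0:ℝ) ∈ Set.Icc (0:ℝ) T := ⟨le_rfl, h0T⟩
  have hmemT : T ∈ Set.Icc (0:ℝ) T := ⟨h0T, le_rfl⟩
  -- basic continuity facts
  have hMc : ContinuousOn M (Icc 0 T) := fun t ht => (hM t ht).continuousWithinAt
  have hPc : ContinuousOn Padj (Icc 0 T) := fun t ht => (hPadj t ht).continuousWithinAt
  have hSsc : ContinuousOn Sstar (Icc 0 T) := fun t ht => (hSstar t ht).continuousWithinAt
  have hSξc : ContinuousOn Sξ (Icc 0 T) := fun t ht => (hSξd t ht).continuousWithinAt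
  have hξsc : ContinuousOn ξstar (Icc 0 T) := by
    have hfe : ξstar = fun t => (M t - B₁ t ⬝ᵥ Padj t) / (2 * η t) := funext hξstar
    rw [hfe]
    exact (hMc.sub (continuousOn_dot hB₁c hPc)).div (continuousOn_const.mul hηc)
      (fun t ht => by have := hηpos t ht; positivity)
  have hXξeq : Xξ = fun u => x - ∫ s in (0:ℝ)..u, ξ s := funext hXξ
  have hXseq : Xstar = fun u => x - ∫ s in (0:ℝ)..u, ξstar s := funext hXstar
  have primc : ∀ {h : ℝ → ℝ}, ContinuousOn h (Icc 0 T) →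
      ContinuousOn (fun u => ∫ s in (0:ℝ)..u, h s) (Icc 0 T) := by
    intro h hcn
    have hio : IntegrableOn h (uIcc 0 T) volume := by
      rw [uIcc_of_le h0T]; exact hcn.integrableOn_Icc
    have := continuousOn_primitive_interval (a := (0:ℝ)) (b := T) hio
    rwa [uIcc_of_le h0T] at this
  have hXξc : ContinuousOn Xξ (Icc 0 T) := by
    rw [hXξeq]; exact continuousOn_const.sub (primc hξc)
  have hXsc : ContinuousOn Xstar (Icc 0 T) := by
    rw [hXseq]; exact continuousOn_const.sub (primc hξsc)
  have ci : ∀ {f : ℝ → ℝ}, ContinuousOn f (Icc 0 T) → IntervalIntegrable f volume 0 T := by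
    intro f hf
    apply ContinuousOn.intervalIntegrable
    rwa [uIcc_of_le h0T]
  -- difference processes
  set dξ : ℝ → ℝ := fun t => ξ t - ξstar t with hdξ
  set dX : ℝ → ℝ := fun t => Xξ t - Xstar t with hdX
  set dS : ℝ → Fin 2 → ℝ := fun t => Sξ t - Sstar t with hdS
  set uvec : ℝ → Fin 2 → ℝ := fun t => dξ t • B₁ t + dX t • B₂ t with huvec
  have hdξc : ContinuousOn dξ (Icc 0 T) := hξc.sub hξsc
  have hdXc : ContinuousOn dX (Icc 0 T) := hXξc.sub hXsc
  have hdSc : ContinuousOn dS (Icc 0 T) := hSξc.sub hSsc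
  have huvc : ContinuousOn uvec (Icc 0 T) := (hdξc.smul hB₁c).add (hdXc.smul hB₂c)
  have hASc : ContinuousOn (fun t => A t *ᵥ dS t) (Icc 0 T) := continuousOn_mulVec' hAc hdSc
  -- boundary values
  have hX0ξ : Xξ 0 = x := by simp [hXξ 0]
  have hX0s : Xstar 0 = x := by simp [hXstar 0]
  have hdX0 : dX 0 = 0 := by simp [hdX, hX0ξ, hX0s]
  have hdXT : dX T = 0 := by simp [hdX, hadm, hadmstar]
  have hdS0 : dS 0 = 0 := by simp [hdS, hSξ0, hSstar0]
  -- derivatives at interior points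
  have hXξd : ∀ t ∈ Ioo (0:ℝ) T, HasDerivAt Xξ (-(ξ t)) t := by
    intro t ht
    rw [hXξeq]
    simpa using (primderiv hξc ht).const_sub x
  have hXsd : ∀ t ∈ Ioo (0:ℝ) T, HasDerivAt Xstar (-(ξstar t)) t := by
    intro t ht
    rw [hXseq]
    simpa using (primderiv hξsc ht).const_sub x
  have hdXd : ∀ t ∈ Ioo (0:ℝ) T, HasDerivAt dX (-(dξ t)) t := by
    intro t ht
    have := (hXξd t ht).sub (hXsd t ht)
    simp only [hdX, hdξ]
    refine this.congr_deriv ?_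
    ring
  have hdSd : ∀ t ∈ Ioo (0:ℝ) T,
      HasDerivAt dS (-(A t *ᵥ dS t) + uvec t) t := by
    intro t ht
    have htI := Ioo_subset_Icc_self ht
    have hnb : Icc (0:ℝ) T ∈ 𝓝 t := Icc_mem_nhds ht.1 ht.2
    have h1 := ((hSξd t htI).hasDerivAt hnb).sub ((hSstar t htI).hasDerivAt hnb)
    refine h1.congr_deriv ?_
    funext i
    simp only [hdS, huvec, hdξ, hdX, Matrix.mulVec, dotProduct, Fin.sum_univ_two,
      Pi.add_apply, Pi.sub_apply, Pi.smul_apply, Pi.neg_apply, smul_eq_mul]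
    ring
  -- the first-order term and its antiderivative
  set FO : ℝ → ℝ := fun t => 2 * η t * ξstar t * dξ t + dξ t * (Θ ⬝ᵥ Sstar t)
      + ξstar t * (Θ ⬝ᵥ dS t) + 2 * lam t * Xstar t * dX t with hFO
  set G : ℝ → ℝ := fun t => M t * dX t + Padj t ⬝ᵥ dS t + (Θ ⬝ᵥ Sstar t) * dX t with hG
  have hFOc : ContinuousOn FO (Icc 0 T) := by
    apply ContinuousOn.add
    apply ContinuousOn.add
    apply ContinuousOn.add
    · exact ((continuousOn_const.mul hηc).mul hξsc).mul hdξc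
    · exact hdξc.mul (continuousOn_dot continuousOn_const hSsc)
    · exact hξsc.mul (continuousOn_dot continuousOn_const hdSc)
    · exact ((continuousOn_const.mul hlamc).mul hXsc).mul hdXc
  have hGc : ContinuousOn G (Icc 0 T) :=
    ((hMc.mul hdXc).add (continuousOn_dot hPc hdSc)).add
      ((continuousOn_dot continuousOn_const hSsc).mul hdXc)
  have hGd : ∀ t ∈ Ioo (0:ℝ) T, HasDerivAt G (-(FO t)) t := by
    intro t ht
    have htI := Ioo_subset_Icc_self ht
    have hnb : Icc (0:ℝ) T ∈ 𝓝 t := Icc_mem_nhds ht.1 ht.2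
    have hMd := (hM t htI).hasDerivAt hnb
    have hPd := (hPadj t htI).hasDerivAt hnb
    have hSsd := (hSstar t htI).hasDerivAt hnb
    have h1 := hMd.mul (hdXd t ht)
    have h2 := hasDerivAt_dot hPd (hdSd t ht)
    have h3 := (hasDerivAt_dot (hasDerivAt_const t Θ) hSsd).mul (hdXd t ht)
    have hsum := (h1.add h2).add h3
    refine hsum.congr_deriv ?_
    have hηne : η t ≠ 0 := ne_of_gt (hηpos t htI)
    have hMt : M t = 2 * η t * ξstar t + B₁ t ⬝ᵥ Padj t := by
      rw [hξstar t]; field_simp; ring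
    rw [hMt]
    simp only [hFO, hdξ, hdX, hdS, huvec, hΘ, Matrix.mulVec, dotProduct,
      Fin.sum_univ_two, Matrix.transpose_apply, Pi.add_apply, Pi.sub_apply, Pi.smul_apply,
      Pi.neg_apply, smul_eq_mul, Matrix.cons_val_zero, Matrix.cons_val_one, Matrix.head_cons,
      Pi.zero_apply]
    ring
  have hFOzero : ∫ t in (0:ℝ)..T, FO t = 0 := by
    have h := ftc2 h0T hGc hGd (ci hFOc).neg
    have hGT : G T = 0 := by simp [hG, hdXT, hPadjT]
    have hG0 : G 0 = 0 := by simp [hG, hdX0, hdS0]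
    rw [intervalIntegral.integral_neg, hGT, hG0] at h
    linarith
  -- integration by parts for the cross term
  set gR : ℝ → ℝ := fun t => dX t * (Θ ⬝ᵥ (-(A t *ᵥ dS t) + uvec t)) with hgR
  set fL : ℝ → ℝ := fun t => dξ t * (Θ ⬝ᵥ dS t) with hfL
  have hgRc : ContinuousOn gR (Icc 0 T) :=
    hdXc.mul (continuousOn_dot continuousOn_const (hASc.neg.add huvc))
  have hfLc : ContinuousOn fL (Icc 0 T) :=
    hdξc.mul (continuousOn_dot continuousOn_const hdSc)
  have hHzero : ∫ t in (0:ℝ)..T, fL t = ∫ t in (0:ℝ)..T, gR t := by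
    have hHd : ∀ t ∈ Ioo (0:ℝ) T,
        HasDerivAt (fun t => dX t * (Θ ⬝ᵥ dS t)) (gR t - fL t) t := by
      intro t ht
      have h1 := (hdXd t ht).mul (hasDerivAt_dot (hasDerivAt_const t Θ) (hdSd t ht))
      refine h1.congr_deriv ?_
      simp only [hgR, hfL, zero_dotProduct]
      ring
    have hHc : ContinuousOn (fun t => dX t * (Θ ⬝ᵥ dS t)) (Icc 0 T) :=
      hdXc.mul (continuousOn_dot continuousOn_const hdSc)
    have h := ftc2 h0T hHc hHd ((ci hgRc).sub (ci hfLc))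
    rw [intervalIntegral.integral_sub (ci hgRc) (ci hfLc), hdXT, hdX0] at h
    simp at h
    linarith
  -- energy estimate
  set Ee : ℝ → ℝ := fun t => dS t ⬝ᵥ dS t with hEe
  set uu : ℝ → ℝ := fun t => uvec t ⬝ᵥ uvec t with huu
  have hEc : ContinuousOn Ee (Icc 0 T) := continuousOn_dot hdSc hdSc
  have huuc : ContinuousOn uu (Icc 0 T) := continuousOn_dot huvc huvc
  set DE : ℝ → ℝ := fun t => 2 * (dS t ⬝ᵥ (-(A t *ᵥ dS t) + uvec t)) with hDE
  have hDEc : ContinuousOn DE (Icc 0 T) :=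
    continuousOn_const.mul (continuousOn_dot hdSc (hASc.neg.add huvc))
  have hDEnonneg : 0 ≤ ∫ t in (0:ℝ)..T, DE t := by
    have hEd : ∀ t ∈ Ioo (0:ℝ) T, HasDerivAt Ee (DE t) t := by
      intro t ht
      have h1 := hasDerivAt_dot (hdSd t ht) (hdSd t ht)
      refine h1.congr_deriv ?_
      simp only [hDE, hdS, huvec, dotProduct, Fin.sum_univ_two, Pi.add_apply,
        Pi.sub_apply, Pi.smul_apply, Pi.neg_apply, smul_eq_mul, Matrix.mulVec, hdξ, hdX]
      ring
    have h := ftc2 h0T hEc hEd (ci hDEc)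
    rw [h]
    have h0 : Ee 0 = 0 := by simp [hEe, hdS0]
    have hTn : 0 ≤ Ee T := by
      have hh : Ee T = dS T 0 * dS T 0 + dS T 1 * dS T 1 := by
        simp [hEe, dotProduct, Fin.sum_univ_two]
      rw [hh]; linarith [sq_nonneg (dS T 0), sq_nonneg (dS T 1)]
    linarith
  have hDEle : ∫ t in (0:ℝ)..T, DE t
      ≤ ∫ t in (0:ℝ)..T, (-(ρhat * Ee t) + (1 / ρhat) * uu t) := by
    apply intervalIntegral.integral_mono_on h0T (ci hDEc)
      (ci ((continuousOn_const.mul hEc).neg.add (continuousOn_const.mul huuc)))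
    intro t ht
    have h1 := hAcoer t ht (dS t)
    have hρne : ρhat ≠ 0 := ne_of_gt hρ
    have h2 : 2 * ρhat * (dS t ⬝ᵥ uvec t) ≤ ρhat ^ 2 * Ee t + uu t := by
      simp only [hEe, huu, dotProduct, Fin.sum_univ_two]
      linarith [sq_nonneg (ρhat * dS t 0 - uvec t 0), sq_nonneg (ρhat * dS t 1 - uvec t 1)]
    have h3 : DE t = -(2 * (dS t ⬝ᵥ (A t *ᵥ dS t))) + 2 * (dS t ⬝ᵥ uvec t) := by
      simp only [hDE, dotProduct, Fin.sum_univ_two, Pi.add_apply, Pi.neg_apply]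
      ring
    have h1' := mul_le_mul_of_nonneg_left h1 (le_of_lt hρ)
    have h4 : ρhat * DE t ≤ -(ρhat ^ 2 * Ee t) + uu t := by
      rw [h3]
      have hEeq : Ee t = dS t ⬝ᵥ dS t := by rw [hEe]
      rw [hEeq] at h2 ⊢
      linarith [h1', h2]
    have h5 := mul_le_mul_of_nonneg_left h4 (le_of_lt (inv_pos.2 hρ))
    calc DE t = ρhat⁻¹ * (ρhat * DE t) := by rw [inv_mul_cancel_left₀ hρne]
      _ ≤ ρhat⁻¹ * (-(ρhat ^ 2 * Ee t) + uu t) := h5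
      _ = -(ρhat * Ee t) + (1 / ρhat) * uu t := by field_simp
  -- squared differences
  set q1 : ℝ → ℝ := fun t => dξ t ^ 2 with hq1
  set q2 : ℝ → ℝ := fun t => dX t ^ 2 with hq2
  have hq1c : ContinuousOn q1 (Icc 0 T) := hdξc.pow 2
  have hq2c : ContinuousOn q2 (Icc 0 T) := hdXc.pow 2
  set W : ℝ → ℝ := fun t => (1 + θ₃) * b₁ ^ 2 * q1 t + (1 + 1/θ₃) * b₂ ^ 2 * q2 t with hW
  have hWc : ContinuousOn W (Icc 0 T) :=
    (continuousOn_const.mul hq1c).add (continuousOn_const.mul hq2c)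
  set IQ1 : ℝ := ∫ t in (0:ℝ)..T, q1 t with hIQ1
  set IQ2 : ℝ := ∫ t in (0:ℝ)..T, q2 t with hIQ2
  set IE : ℝ := ∫ t in (0:ℝ)..T, Ee t with hIE
  set IU : ℝ := ∫ t in (0:ℝ)..T, uu t with hIU
  set IW : ℝ := ∫ t in (0:ℝ)..T, W t with hIW
  have s1 : 0 ≤ IQ1 := intervalIntegral.integral_nonneg h0T
    (fun u _ => by simp only [hq1]; positivity)
  have s2 : 0 ≤ IQ2 := intervalIntegral.integral_nonneg h0T
    (fun u _ => by simp only [hq2]; positivity)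
  have s4 : 0 ≤ IU := intervalIntegral.integral_nonneg h0T (fun u _ => by
    simp only [huu, dotProduct, Fin.sum_univ_two]
    linarith [sq_nonneg (uvec u 0), sq_nonneg (uvec u 1)])
  -- energy estimate, integrated form
  have hlin1 : ∫ t in (0:ℝ)..T, (-(ρhat * Ee t) + (1/ρhat) * uu t)
      = -(ρhat * IE) + (1/ρhat) * IU := by
    rw [intervalIntegral.integral_add (ci (continuousOn_const.fun_mul hEc).fun_neg)
      (ci (continuousOn_const.fun_mul huuc)), intervalIntegral.integral_neg,
      intervalIntegral.integral_const_mul, intervalIntegral.integral_const_mul]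
  have s5 : ρhat * IE ≤ (1/ρhat) * IU := by
    have h := hDEnonneg.trans hDEle
    rw [hlin1] at h
    linarith
  -- u is controlled by the squared differences
  have s6 : IU ≤ IW := by
    apply intervalIntegral.integral_mono_on h0T (ci huuc) (ci hWc)
    intro t ht
    have hp := hB₁bound t ht
    have hq := hB₂bound t ht
    simp only [dotProduct, Fin.sum_univ_two] at hp hq
    have hθ₃ne : θ₃ ≠ 0 := ne_of_gt hθ₃
    have hsuff : θ₃ * uu t ≤ θ₃ * W t := by
      have hWexp : θ₃ * W t = θ₃ * (1 + θ₃) * b₁ ^ 2 * q1 t + (θ₃ + 1) * b₂ ^ 2 * q2 t := by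
        simp only [hW]; field_simp
      rw [hWexp]
      simp only [huu, huvec, hq1, hq2, dotProduct, Fin.sum_univ_two, Pi.add_apply,
        Pi.smul_apply, smul_eq_mul]
      linarith [sq_nonneg (θ₃ * dξ t * B₁ t 0 - dX t * B₂ t 0),
        sq_nonneg (θ₃ * dξ t * B₁ t 1 - dX t * B₂ t 1),
        mul_le_mul_of_nonneg_left hp
          (mul_nonneg (mul_nonneg hθ₃.le (by linarith : (0:ℝ) ≤ 1 + θ₃)) (sq_nonneg (dξ t))),
        mul_le_mul_of_nonneg_left hq
          (mul_nonneg (by linarith : (0:ℝ) ≤ θ₃ + 1) (sq_nonneg (dX t)))]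
    exact le_of_mul_le_mul_left hsuff hθ₃
  have s7c : ∀ e : ℝ, e * IW = e * (1 + θ₃) * b₁ ^ 2 * IQ1 + e * (1 + 1/θ₃) * b₂ ^ 2 * IQ2 := by
    intro e
    have : IW = (1 + θ₃) * b₁ ^ 2 * IQ1 + (1 + 1/θ₃) * b₂ ^ 2 * IQ2 := by
      rw [hIW, hIQ1, hIQ2,
        intervalIntegral.integral_add (ci (continuousOn_const.fun_mul hq1c))
          (ci (continuousOn_const.fun_mul hq2c)),
        intervalIntegral.integral_const_mul, intervalIntegral.integral_const_mul]
    rw [this]; ring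
  -- cross term lower bound, pointwise
  have hgpt : ∀ t ∈ Icc (0:ℝ) T,
      -((θ₁ + θ₂)/2 * q2 t + a ^ 2 / (2*θ₁) * Ee t + 1/(2*θ₂) * uu t) ≤ gR t := by
    intro t ht
    have hA := hAbound t ht (dS t)
    have hgexp : gR t = dX t * (-((A t *ᵥ dS t) 0) + uvec t 0) := by
      simp [hgR, hΘ, dotProduct, Fin.sum_univ_two, Pi.add_apply, Pi.neg_apply,
        Matrix.cons_val_zero, Matrix.cons_val_one, Matrix.head_cons]
    have h2θ : (0:ℝ) < 2 * θ₁ * θ₂ := by positivity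
    have hsuff : (2 * θ₁ * θ₂) * -((θ₁ + θ₂)/2 * q2 t + a ^ 2 / (2*θ₁) * Ee t
        + 1/(2*θ₂) * uu t) ≤ (2 * θ₁ * θ₂) * gR t := by
      have hL : (2 * θ₁ * θ₂) * -((θ₁ + θ₂)/2 * q2 t + a ^ 2 / (2*θ₁) * Ee t + 1/(2*θ₂) * uu t)
          = -(θ₁ * θ₂ * (θ₁ + θ₂) * q2 t + θ₂ * a ^ 2 * Ee t + θ₁ * uu t) := by
        field_simp
      rw [hL, hgexp]
      simp only [dotProduct, Fin.sum_univ_two] at hA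
      simp only [hq2, hEe, huu, dotProduct, Fin.sum_univ_two]
      linarith [mul_nonneg hθ₂.le (sq_nonneg (θ₁ * dX t - (A t *ᵥ dS t) 0)),
        mul_nonneg hθ₁.le (sq_nonneg (θ₂ * dX t + uvec t 0)),
        mul_le_mul_of_nonneg_left hA hθ₂.le,
        mul_nonneg hθ₂.le (sq_nonneg ((A t *ᵥ dS t) 1)),
        mul_nonneg hθ₁.le (sq_nonneg (uvec t 1))]
    exact le_of_mul_le_mul_left hsuff h2θ
  have hnegc : ContinuousOn (fun t => -((θ₁ + θ₂)/2 * q2 t + a ^ 2 / (2*θ₁) * Ee t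
      + 1/(2*θ₂) * uu t)) (Icc 0 T) :=
    (((continuousOn_const.mul hq2c).add (continuousOn_const.mul hEc)).add
      (continuousOn_const.mul huuc)).neg
  have hlin2 : ∫ t in (0:ℝ)..T, (-((θ₁ + θ₂)/2 * q2 t + a ^ 2 / (2*θ₁) * Ee t
      + 1/(2*θ₂) * uu t))
      = -((θ₁ + θ₂)/2 * IQ2 + a ^ 2 / (2*θ₁) * IE + 1/(2*θ₂) * IU) := by
    rw [intervalIntegral.integral_neg,
      intervalIntegral.integral_add (ci ((continuousOn_const.fun_mul hq2c).fun_add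
        (continuousOn_const.fun_mul hEc))) (ci (continuousOn_const.fun_mul huuc)),
      intervalIntegral.integral_add (ci (continuousOn_const.fun_mul hq2c))
        (ci (continuousOn_const.fun_mul hEc)),
      intervalIntegral.integral_const_mul, intervalIntegral.integral_const_mul,
      intervalIntegral.integral_const_mul]
  have s9 : -((θ₁ + θ₂)/2 * IQ2 + a ^ 2 / (2*θ₁) * IE + 1/(2*θ₂) * IU)
      ≤ ∫ t in (0:ℝ)..T, fL t := by
    rw [hHzero, ← hlin2]
    exact intervalIntegral.integral_mono_on h0T (ci hnegc) (ci hgRc) hgpt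
  -- running cost lower bound
  have s8 : ηmin * IQ1 + lammin * IQ2 ≤ ∫ t in (0:ℝ)..T, (η t * q1 t + lam t * q2 t) := by
    have hlin3 : ∫ t in (0:ℝ)..T, (ηmin * q1 t + lammin * q2 t)
        = ηmin * IQ1 + lammin * IQ2 := by
      rw [intervalIntegral.integral_add (ci (continuousOn_const.fun_mul hq1c))
        (ci (continuousOn_const.fun_mul hq2c)),
        intervalIntegral.integral_const_mul, intervalIntegral.integral_const_mul]
    rw [← hlin3]
    apply intervalIntegral.integral_mono_on h0T
      (ci ((continuousOn_const.fun_mul hq1c).fun_add (continuousOn_const.fun_mul hq2c)))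
      (ci ((hηc.fun_mul hq1c).fun_add (hlamc.fun_mul hq2c)))
    intro t ht
    have h1 := hηlb t ht
    have h2 := hlamlb t ht
    have h3 : 0 ≤ q1 t := by simp only [hq1]; positivity
    have h4 : 0 ≤ q2 t := by simp only [hq2]; positivity
    linarith [mul_le_mul_of_nonneg_right h1 h3, mul_le_mul_of_nonneg_right h2 h4]
  -- from the energy estimate
  have hIE2 : IE ≤ 1 / ρhat ^ 2 * IU := by
    have h := mul_le_mul_of_nonneg_left s5 (le_of_lt (inv_pos.2 hρ))
    rw [inv_mul_cancel_left₀ (ne_of_gt hρ)] at h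
    have hρne : ρhat ≠ 0 := ne_of_gt hρ
    calc IE ≤ ρhat⁻¹ * ((1/ρhat) * IU) := h
      _ = 1 / ρhat ^ 2 * IU := by ring
  have hIEa : a ^ 2 / (2*θ₁) * IE ≤ a ^ 2 / (2 * θ₁ * ρhat ^ 2) * IU := by
    have h0 : (0:ℝ) ≤ a ^ 2 / (2*θ₁) := div_nonneg (sq_nonneg a) (by linarith)
    have h := mul_le_mul_of_nonneg_left hIE2 h0
    have hρne : ρhat ≠ 0 := ne_of_gt hρ
    have hθ₁ne : θ₁ ≠ 0 := ne_of_gt hθ₁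
    calc a ^ 2 / (2*θ₁) * IE ≤ a ^ 2 / (2*θ₁) * (1 / ρhat ^ 2 * IU) := h
      _ = a ^ 2 / (2 * θ₁ * ρhat ^ 2) * IU := by ring
  have hc0 : 0 ≤ c := by
    rw [hc]
    have h0 : (0:ℝ) ≤ a ^ 2 / (2 * θ₁ * ρhat ^ 2) :=
      div_nonneg (sq_nonneg a) (by positivity)
    have h1 : (0:ℝ) ≤ 1 / (2*θ₂) := by positivity
    linarith
  have hcIU : c * IU ≤ c * IW := mul_le_mul_of_nonneg_left s6 hc0
  have hcsplit : c * IU = a ^ 2 / (2 * θ₁ * ρhat ^ 2) * IU + 1/(2*θ₂) * IU := by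
    rw [hc]; ring
  -- the round-trip cost is nonnegative
  have hRT : 0 ≤ (∫ t in (0:ℝ)..T, (η t * q1 t + lam t * q2 t)) + ∫ t in (0:ℝ)..T, fL t := by
    have P1 : 0 ≤ (ηmin - (1 + θ₃) * b₁ ^ 2 * c) * IQ1 := mul_nonneg hcond2 s1
    have P2 : 0 ≤ (lammin - (θ₁ + θ₂) / 2 - b₂ ^ 2 * (1 + 1/θ₃) * c) * IQ2 :=
      mul_nonneg hcond1 s2
    have G4 := s7c c
    have t1 : -((θ₁ + θ₂)/2 * IQ2 + c * IU) ≤ ∫ t in (0:ℝ)..T, fL t := by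
      linarith [s9, hcsplit, hIEa]
    have t2 : -((θ₁ + θ₂)/2 * IQ2 + c * IW) ≤ ∫ t in (0:ℝ)..T, fL t := by
      linarith [t1, hcIU]
    have P1' : 0 ≤ ηmin * IQ1 - c * (1 + θ₃) * b₁ ^ 2 * IQ1 := by linarith [P1]
    have P2' : 0 ≤ lammin * IQ2 - (θ₁ + θ₂)/2 * IQ2 - c * (1 + 1/θ₃) * b₂ ^ 2 * IQ2 := by
      linarith [P2]
    linarith [s8, t2, G4, P1', P2']
  -- decomposition of the cost difference
  have hdecomp : (fun t => η t * ξ t ^ 2 + ξ t * (Θ ⬝ᵥ Sξ t) + lam t * Xξ t ^ 2)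
      = fun t => (η t * ξstar t ^ 2 + ξstar t * (Θ ⬝ᵥ Sstar t) + lam t * Xstar t ^ 2)
          + ((η t * q1 t + lam t * q2 t) + fL t + FO t) := by
    funext t
    simp only [hq1, hq2, hfL, hFO, hdξ, hdX, hdS, dotProduct, Fin.sum_univ_two,
      Pi.sub_apply]
    ring
  have hJsc : ContinuousOn (fun t => η t * ξstar t ^ 2 + ξstar t * (Θ ⬝ᵥ Sstar t)
      + lam t * Xstar t ^ 2) (Icc 0 T) :=
    ((hηc.mul (hξsc.pow 2)).add (hξsc.mul (continuousOn_dot continuousOn_const hSsc))).add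
      (hlamc.mul (hXsc.pow 2))
  have hRT0c : ContinuousOn (fun t => η t * q1 t + lam t * q2 t) (Icc 0 T) :=
    (hηc.mul hq1c).add (hlamc.mul hq2c)
  calc (∫ t in (0:ℝ)..T, (η t * (ξstar t) ^ 2 + ξstar t * (Θ ⬝ᵥ Sstar t)
        + lam t * (Xstar t) ^ 2))
      ≤ (∫ t in (0:ℝ)..T, (η t * (ξstar t) ^ 2 + ξstar t * (Θ ⬝ᵥ Sstar t)
        + lam t * (Xstar t) ^ 2))
        + (((∫ t in (0:ℝ)..T, (η t * q1 t + lam t * q2 t)) + ∫ t in (0:ℝ)..T, fL t)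
          + ∫ t in (0:ℝ)..T, FO t) := by
        rw [hFOzero]
        linarith
    _ = ∫ t in (0:ℝ)..T, (η t * (ξ t) ^ 2 + ξ t * (Θ ⬝ᵥ Sξ t) + lam t * (Xξ t) ^ 2) := by
        rw [hdecomp]
        rw [intervalIntegral.integral_add (ci hJsc) (ci ((hRT0c.fun_add hfLc).fun_add hFOc)),
          intervalIntegral.integral_add (ci (hRT0c.fun_add hfLc)) (ci hFOc),
          intervalIntegral.integral_add (ci hRT0c) (ci hfLc)]
end
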